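/- Let p be a prime, G a finite group, and H ≤ G a subgroup isomorphic to C_p × C_p (the direct product of two cyclic groups of order p). Then every generating multiset S of G with |S| ≤ [G:H] is Nielsen equivalent to a multiset contained in a left-right transversal of H in G. -/

import Mathlib

open scoped Classical

section Defs

variable {G : Type*} [Group G]

/-- A single Nielsen move on a finite multiset of group elements: replace one
occurrence of `g` by `g⁻¹`, or by `h * g` or `g * h` where `h` is another
occurrence in the multiset. -/
def NielsenMove (S T : Multiset G) : Prop :=
  (∃ g ∈ S, T = g⁻¹ ::ₘ S.erase g) ∨
    (∃ g ∈ S, ∃ h ∈ S.erase g, T = h * g ::ₘ S.erase g ∨ T = g * h ::ₘ S.erase g)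

/-- Nielsen equivalence: one multiset is obtained from the other by a finite
sequence of Nielsen moves. -/
def NielsenEquiv (S T : Multiset G) : Prop :=
  Relation.ReflTransGen NielsenMove S T

/-- The elements of the multiset `S` lie in pairwise distinct left cosets of `H`. -/
def LeftDistinct (H : Subgroup G) (S : Multiset G) : Prop :=
  (S.map fun x => ((x : G) : G ⧸ H)).Nodup

/-- The elements of the multiset `S` lie in pairwise distinct right cosets of `H`
(using that `Hx = Hy ↔ x⁻¹H = y⁻¹H`). -/
def RightDistinct (H : Subgroup G) (S : Multiset G) : Prop :=
  (S.map fun x => ((x⁻¹ : G) : G ⧸ H)).Nodup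

/-- `T` is a left transversal of `H`: it contains exactly one element of each
left coset of `H`. -/
def IsLeftTransversal (H : Subgroup G) (T : Set G) : Prop :=
  ∀ g : G, ∃! t, t ∈ T ∧ ((t : G) : G ⧸ H) = ((g : G) : G ⧸ H)

/-- `T` is a right transversal of `H`: it contains exactly one element of each
right coset of `H` (using that `Hx = Hy ↔ x⁻¹H = y⁻¹H`). -/
def IsRightTransversal (H : Subgroup G) (T : Set G) : Prop :=
  ∀ g : G, ∃! t, t ∈ T ∧ ((t⁻¹ : G) : G ⧸ H) = ((g⁻¹ : G) : G ⧸ H)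

/-- The left coset `aH` as a set. -/
def lcoset (a : G) (H : Subgroup G) : Set G := {x | a⁻¹ * x ∈ H}

/-- The right coset `Ha` as a set. -/
def rcoset (H : Subgroup G) (a : G) : Set G := {x | x * a⁻¹ ∈ H}

/-- The double coset `HgH` as a set. -/
def dcoset (H : Subgroup G) (g : G) : Set G := {x | ∃ h₁ ∈ H, ∃ h₂ ∈ H, x = h₁ * g * h₂}

/-- `S` is left-right clean relative to `H`: `S ∖ H` is nonempty and its elements
lie in pairwise distinct left cosets and pairwise distinct right cosets of `H`. -/
def LeftRightClean (H : Subgroup G) (S : Multiset G) : Prop :=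
  (∃ x ∈ S, x ∉ H) ∧
    LeftDistinct H (S.filter fun x => x ∉ H) ∧
    RightDistinct H (S.filter fun x => x ∉ H)

end Defs

section API

variable {G : Type*} [Group G]

namespace NielsenAux

lemma equiv_refl (S : Multiset G) : NielsenEquiv S S := Relation.ReflTransGen.refl

lemma equiv_trans {S T U : Multiset G} (h1 : NielsenEquiv S T) (h2 : NielsenEquiv T U) :
    NielsenEquiv S U := Relation.ReflTransGen.trans h1 h2

lemma move_inv {M : Multiset G} (g : G) :
    NielsenMove (g ::ₘ M) (g⁻¹ ::ₘ M) :=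
  Or.inl ⟨g, Multiset.mem_cons_self g M, by rw [Multiset.erase_cons_head]⟩

lemma move_mull {M : Multiset G} (g : G) {h : G} (hh : h ∈ M) :
    NielsenMove (g ::ₘ M) (h * g ::ₘ M) :=
  Or.inr ⟨g, Multiset.mem_cons_self g M, h, by rw [Multiset.erase_cons_head]; exact hh,
    Or.inl (by rw [Multiset.erase_cons_head])⟩

lemma move_mulr {M : Multiset G} (g : G) {h : G} (hh : h ∈ M) :
    NielsenMove (g ::ₘ M) (g * h ::ₘ M) :=
  Or.inr ⟨g, Multiset.mem_cons_self g M, h, by rw [Multiset.erase_cons_head]; exact hh,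
    Or.inr (by rw [Multiset.erase_cons_head])⟩

lemma equiv_inv {M : Multiset G} (g : G) : NielsenEquiv (g ::ₘ M) (g⁻¹ ::ₘ M) :=
  Relation.ReflTransGen.single (move_inv g)

lemma equiv_mull {M : Multiset G} (g : G) {h : G} (hh : h ∈ M) :
    NielsenEquiv (g ::ₘ M) (h * g ::ₘ M) :=
  Relation.ReflTransGen.single (move_mull g hh)

lemma equiv_mulr {M : Multiset G} (g : G) {h : G} (hh : h ∈ M) :
    NielsenEquiv (g ::ₘ M) (g * h ::ₘ M) :=
  Relation.ReflTransGen.single (move_mulr g hh)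

lemma equiv_of_eq {S T : Multiset G} (h : S = T) : NielsenEquiv S T := h ▸ equiv_refl S

lemma equiv_mull_inv {M : Multiset G} (g : G) {h : G} (hh : h ∈ M) :
    NielsenEquiv (g ::ₘ M) (h⁻¹ * g ::ₘ M) := by
  obtain ⟨M', rfl⟩ := Multiset.exists_cons_of_mem hh
  rw [Multiset.cons_swap g h]
  refine equiv_trans (equiv_inv h) ?_
  rw [Multiset.cons_swap h⁻¹ g]
  refine equiv_trans (equiv_mull g (Multiset.mem_cons_self _ _)) ?_
  rw [Multiset.cons_swap (h⁻¹ * g) h⁻¹]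
  have e3 : NielsenEquiv (h⁻¹ ::ₘ (h⁻¹ * g) ::ₘ M') (h ::ₘ (h⁻¹ * g) ::ₘ M') := by
    have := equiv_inv (M := (h⁻¹ * g) ::ₘ M') (h⁻¹)
    rwa [inv_inv] at this
  refine equiv_trans e3 ?_
  rw [Multiset.cons_swap h]
  exact equiv_refl _

lemma equiv_mulr_inv {M : Multiset G} (g : G) {h : G} (hh : h ∈ M) :
    NielsenEquiv (g ::ₘ M) (g * h⁻¹ ::ₘ M) := by
  obtain ⟨M', rfl⟩ := Multiset.exists_cons_of_mem hh
  rw [Multiset.cons_swap g h]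
  refine equiv_trans (equiv_inv h) ?_
  rw [Multiset.cons_swap h⁻¹ g]
  refine equiv_trans (equiv_mulr g (Multiset.mem_cons_self _ _)) ?_
  rw [Multiset.cons_swap (g * h⁻¹) h⁻¹]
  have e3 : NielsenEquiv (h⁻¹ ::ₘ (g * h⁻¹) ::ₘ M') (h ::ₘ (g * h⁻¹) ::ₘ M') := by
    have := equiv_inv (M := (g * h⁻¹) ::ₘ M') (h⁻¹)
    rwa [inv_inv] at this
  refine equiv_trans e3 ?_
  rw [Multiset.cons_swap h]
  exact equiv_refl _

lemma move_rev {S T : Multiset G} (h : NielsenMove S T) : NielsenEquiv T S := by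
  rcases h with ⟨g, hg, rfl⟩ | ⟨g, hg, h, hh, (rfl | rfl)⟩
  · conv_rhs => rw [← Multiset.cons_erase hg]
    have := equiv_inv (M := S.erase g) (g⁻¹)
    rwa [inv_inv] at this
  · conv_rhs => rw [← Multiset.cons_erase hg]
    have := equiv_mull_inv (M := S.erase g) (h * g) hh
    rwa [inv_mul_cancel_left] at this
  · conv_rhs => rw [← Multiset.cons_erase hg]
    have := equiv_mulr_inv (M := S.erase g) (g * h) hh
    rwa [mul_inv_cancel_right] at this

lemma equiv_symm {S T : Multiset G} (h : NielsenEquiv S T) : NielsenEquiv T S := by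
  induction h with
  | refl => exact equiv_refl _
  | tail _ hmove ih => exact equiv_trans (move_rev hmove) ih

lemma move_add {S T : Multiset G} (U : Multiset G) (h : NielsenMove S T) :
    NielsenMove (S + U) (T + U) := by
  rcases h with ⟨g, hg, rfl⟩ | ⟨g, hg, h, hh, (rfl | rfl)⟩
  · exact Or.inl ⟨g, Multiset.mem_add.mpr (Or.inl hg),
      by rw [Multiset.erase_add_left_pos _ hg, Multiset.cons_add]⟩
  · exact Or.inr ⟨g, Multiset.mem_add.mpr (Or.inl hg), h,
      by rw [Multiset.erase_add_left_pos _ hg]; exact Multiset.mem_add.mpr (Or.inl hh),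
      Or.inl (by rw [Multiset.erase_add_left_pos _ hg, Multiset.cons_add])⟩
  · exact Or.inr ⟨g, Multiset.mem_add.mpr (Or.inl hg), h,
      by rw [Multiset.erase_add_left_pos _ hg]; exact Multiset.mem_add.mpr (Or.inl hh),
      Or.inr (by rw [Multiset.erase_add_left_pos _ hg, Multiset.cons_add])⟩

lemma equiv_add_right {S T : Multiset G} (U : Multiset G) (h : NielsenEquiv S T) :
    NielsenEquiv (S + U) (T + U) := by
  induction h with
  | refl => exact equiv_refl _
  | tail _ hmove ih => exact Relation.ReflTransGen.tail ih (move_add U hmove)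

lemma equiv_add_left {S T : Multiset G} (U : Multiset G) (h : NielsenEquiv S T) :
    NielsenEquiv (U + S) (U + T) := by
  rw [add_comm U S, add_comm U T]; exact equiv_add_right U h

lemma equiv_cons_congr {M M' : Multiset G} (g : G) (h : NielsenEquiv M M') :
    NielsenEquiv (g ::ₘ M) (g ::ₘ M') := by
  have := equiv_add_left {g} h
  simpa [Multiset.singleton_add] using this

lemma equiv_smul_left {M : Multiset G} {u : G}
    (hu : u ∈ Subgroup.closure {x : G | x ∈ M}) :
    ∀ g : G, NielsenEquiv (g ::ₘ M) (u * g ::ₘ M) := by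
  induction hu using Subgroup.closure_induction with
  | mem x hx => exact fun g => equiv_mull g hx
  | one => intro g; rw [one_mul]; exact equiv_refl _
  | mul x y hx hy ihx ihy =>
      intro g
      have := equiv_trans (ihy g) (ihx (y * g))
      rwa [← mul_assoc] at this
  | inv x hx ihx =>
      intro g
      have h1 := ihx (x⁻¹ * g)
      rw [mul_inv_cancel_left] at h1
      exact equiv_symm h1

lemma equiv_smul_right {M : Multiset G} {v : G}
    (hv : v ∈ Subgroup.closure {x : G | x ∈ M}) :
    ∀ g : G, NielsenEquiv (g ::ₘ M) (g * v ::ₘ M) := by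
  induction hv using Subgroup.closure_induction with
  | mem x hx => exact fun g => equiv_mulr g hx
  | one => intro g; rw [mul_one]; exact equiv_refl _
  | mul x y hx hy ihx ihy =>
      intro g
      have := equiv_trans (ihx g) (ihy (g * x))
      rwa [mul_assoc] at this
  | inv x hx ihx =>
      intro g
      have h1 := ihx (g * x⁻¹)
      rw [inv_mul_cancel_right] at h1
      exact equiv_symm h1

lemma equiv_sandwich {M : Multiset G} {u v : G}
    (hu : u ∈ Subgroup.closure {x : G | x ∈ M})
    (hv : v ∈ Subgroup.closure {x : G | x ∈ M}) (g : G) :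
    NielsenEquiv (g ::ₘ M) (u * g * v ::ₘ M) := by
  have := equiv_trans (equiv_smul_right hv g) (equiv_smul_left hu (g * v))
  rwa [← mul_assoc] at this

lemma mem_closure_of_mem {M : Multiset G} {x : G} (h : x ∈ M) :
    x ∈ Subgroup.closure {y : G | y ∈ M} :=
  Subgroup.subset_closure h

lemma valset_cons (g : G) (M : Multiset G) :
    {x : G | x ∈ g ::ₘ M} = insert g {x : G | x ∈ M} := by
  ext y; simp [Multiset.mem_cons]

lemma closure_insert_mull {s : Set G} {g h : G} (hh : h ∈ s) :
    Subgroup.closure (insert g s) = Subgroup.closure (insert (h * g) s) := by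
  apply le_antisymm
  · rw [Subgroup.closure_le]
    rintro y (rfl | hy)
    · have h1 : h * y ∈ Subgroup.closure (insert (h * y) s) :=
        Subgroup.subset_closure (Set.mem_insert _ _)
      have h2 : h ∈ Subgroup.closure (insert (h * y) s) :=
        Subgroup.subset_closure (Set.mem_insert_of_mem _ hh)
      have := mul_mem (inv_mem h2) h1
      rwa [inv_mul_cancel_left] at this
    · exact Subgroup.subset_closure (Set.mem_insert_of_mem _ hy)
  · rw [Subgroup.closure_le]
    rintro y (rfl | hy)
    · exact mul_mem (Subgroup.subset_closure (Set.mem_insert_of_mem _ hh))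
        (Subgroup.subset_closure (Set.mem_insert _ _))
    · exact Subgroup.subset_closure (Set.mem_insert_of_mem _ hy)

lemma closure_insert_mulr {s : Set G} {g h : G} (hh : h ∈ s) :
    Subgroup.closure (insert g s) = Subgroup.closure (insert (g * h) s) := by
  apply le_antisymm
  · rw [Subgroup.closure_le]
    rintro y (rfl | hy)
    · have h1 : y * h ∈ Subgroup.closure (insert (y * h) s) :=
        Subgroup.subset_closure (Set.mem_insert _ _)
      have h2 : h ∈ Subgroup.closure (insert (y * h) s) :=
        Subgroup.subset_closure (Set.mem_insert_of_mem _ hh)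
      have := mul_mem h1 (inv_mem h2)
      rwa [mul_inv_cancel_right] at this
    · exact Subgroup.subset_closure (Set.mem_insert_of_mem _ hy)
  · rw [Subgroup.closure_le]
    rintro y (rfl | hy)
    · exact mul_mem (Subgroup.subset_closure (Set.mem_insert _ _))
        (Subgroup.subset_closure (Set.mem_insert_of_mem _ hh))
    · exact Subgroup.subset_closure (Set.mem_insert_of_mem _ hy)

lemma closure_insert_inv {s : Set G} {g : G} :
    Subgroup.closure (insert g s) = Subgroup.closure (insert g⁻¹ s) := by
  apply le_antisymm <;> rw [Subgroup.closure_le] <;> rintro y (rfl | hy)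
  · have := inv_mem (Subgroup.subset_closure (k := insert y⁻¹ s) (Set.mem_insert _ _))
    rwa [inv_inv] at this
  · exact Subgroup.subset_closure (Set.mem_insert_of_mem _ hy)
  · exact inv_mem (Subgroup.subset_closure (Set.mem_insert _ _))
  · exact Subgroup.subset_closure (Set.mem_insert_of_mem _ hy)

lemma closure_move {S T : Multiset G} (h : NielsenMove S T) :
    Subgroup.closure {x : G | x ∈ S} = Subgroup.closure {x : G | x ∈ T} := by
  rcases h with ⟨g, hg, rfl⟩ | ⟨g, hg, h, hh, (rfl | rfl)⟩
  · conv_lhs => rw [← Multiset.cons_erase hg]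
    rw [valset_cons, valset_cons, closure_insert_inv]
  · conv_lhs => rw [← Multiset.cons_erase hg]
    rw [valset_cons, valset_cons]
    exact closure_insert_mull (s := {x : G | x ∈ S.erase g}) hh
  · conv_lhs => rw [← Multiset.cons_erase hg]
    rw [valset_cons, valset_cons]
    exact closure_insert_mulr (s := {x : G | x ∈ S.erase g}) hh

lemma closure_equiv {S T : Multiset G} (h : NielsenEquiv S T) :
    Subgroup.closure {x : G | x ∈ S} = Subgroup.closure {x : G | x ∈ T} := by
  induction h with
  | refl => rfl
  | tail _ hmove ih => exact ih.trans (closure_move hmove)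

lemma card_move {S T : Multiset G} (h : NielsenMove S T) : S.card = T.card := by
  rcases h with ⟨g, hg, rfl⟩ | ⟨g, hg, h, hh, (rfl | rfl)⟩ <;>
  · conv_lhs => rw [← Multiset.cons_erase hg]
    simp

lemma card_equiv {S T : Multiset G} (h : NielsenEquiv S T) : S.card = T.card := by
  induction h with
  | refl => rfl
  | tail _ hmove ih => exact ih.trans (card_move hmove)

end NielsenAux

end API
section Cosets

open scoped Classical

attribute [local instance] Fintype.ofFinite

variable {G : Type*} [Group G]

namespace NielsenAux

/-- left coset class -/
abbrev piL (H : Subgroup G) (g : G) : G ⧸ H := (g : G ⧸ H)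

/-- right coset class, encoded via inverse -/
abbrev piR (H : Subgroup G) (g : G) : G ⧸ H := ((g⁻¹ : G) : G ⧸ H)

variable {H : Subgroup G}

lemma piL_eq {a b : G} : piL H a = piL H b ↔ a⁻¹ * b ∈ H := QuotientGroup.eq

lemma piR_eq {a b : G} : piR H a = piR H b ↔ a * b⁻¹ ∈ H := by
  rw [piR, piR, QuotientGroup.eq, inv_inv]

lemma piL_mul_right {a h : G} (hh : h ∈ H) : piL H (a * h) = piL H a := by
  rw [piL_eq]; simpa using inv_mem hh

lemma piR_mul_left {a h : G} (hh : h ∈ H) : piR H (h * a) = piR H a := by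
  rw [piR_eq]; simpa using inv_mem hh

lemma piL_eq_one_iff {a : G} : piL H a = piL H 1 ↔ a ∈ H := by
  rw [piL_eq]; simp

/-- double coset relation -/
def dRel (H : Subgroup G) (x y : G) : Prop := ∃ h₁ ∈ H, ∃ h₂ ∈ H, y = h₁ * x * h₂

lemma dRel_refl (x : G) : dRel H x x := ⟨1, one_mem H, 1, one_mem H, by simp⟩

lemma dRel_symm {x y : G} (h : dRel H x y) : dRel H y x := by
  obtain ⟨h₁, m1, h₂, m2, rfl⟩ := h
  exact ⟨h₁⁻¹, inv_mem m1, h₂⁻¹, inv_mem m2, by group⟩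

lemma dRel_trans {x y z : G} (h : dRel H x y) (h' : dRel H y z) : dRel H x z := by
  obtain ⟨h₁, m1, h₂, m2, rfl⟩ := h
  obtain ⟨g₁, n1, g₂, n2, rfl⟩ := h'
  exact ⟨g₁ * h₁, mul_mem n1 m1, h₂ * g₂, mul_mem m2 n2, by group⟩

lemma dRel_inv {x y : G} (h : dRel H x y) : dRel H x⁻¹ y⁻¹ := by
  obtain ⟨h₁, m1, h₂, m2, rfl⟩ := h
  exact ⟨h₂⁻¹, inv_mem m2, h₁⁻¹, inv_mem m1, by group⟩

lemma dRel_of_piL {x y : G} (h : piL H x = piL H y) : dRel H x y := by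
  rw [piL_eq] at h
  exact ⟨1, one_mem H, x⁻¹ * y, h, by group⟩

lemma dRel_of_piR {x y : G} (h : piR H x = piR H y) : dRel H x y := by
  rw [piR_eq] at h
  exact ⟨(x * y⁻¹)⁻¹, inv_mem h, 1, one_mem H, by group⟩

def dSetoid (H : Subgroup G) : Setoid G :=
  ⟨dRel H, ⟨dRel_refl, dRel_symm, dRel_trans⟩⟩

abbrev DQ (H : Subgroup G) := Quotient (dSetoid H)

def dmk (H : Subgroup G) (x : G) : DQ H := Quotient.mk (dSetoid H) x

lemma dmk_eq_iff {x y : G} : dmk H x = dmk H y ↔ dRel H x y := by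
  constructor
  · exact fun h => Quotient.exact h
  · exact fun h => Quotient.sound h

noncomputable def dInv (H : Subgroup G) : DQ H → DQ H :=
  Quotient.map (·⁻¹) (fun _ _ h => dRel_inv h)

lemma dInv_dmk (x : G) : dInv H (dmk H x) = dmk H x⁻¹ := rfl

lemma dInv_dInv (d : DQ H) : dInv H (dInv H d) = d := by
  induction d using Quotient.inductionOn with
  | h x => show dmk H x⁻¹⁻¹ = dmk H x; rw [inv_inv]

lemma dInv_injective : Function.Injective (dInv H) := by
  intro a b h
  rw [← dInv_dInv (H := H) a, h, dInv_dInv]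

/-- class-of-left-coset map -/
noncomputable def dL (H : Subgroup G) : G ⧸ H → DQ H := fun c => dmk H c.out

lemma dL_piL (x : G) : dL H (piL H x) = dmk H x := by
  rw [dL, dmk_eq_iff]
  have : piL H ((piL H x).out) = piL H x := Quotient.out_eq _
  exact dRel_of_piL this

lemma dL_piR (x : G) : dL H (piR H x) = dInv H (dmk H x) := by
  rw [piR, dInv_dmk]; exact dL_piL x⁻¹

variable [Finite G]

/-- the set of left coset classes inside the double coset of `x` -/
noncomputable def Lfin (H : Subgroup G) (x : G) : Finset (G ⧸ H) :=
  Finset.image (fun h : ↥H => piL H (h * x)) Finset.univ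

lemma mem_Lfin {c : G ⧸ H} {x : G} : c ∈ Lfin H x ↔ ∃ h ∈ H, c = piL H (h * x) := by
  simp only [Lfin, Finset.mem_image, Finset.mem_univ, true_and]
  constructor
  · rintro ⟨h, rfl⟩; exact ⟨h, h.2, rfl⟩
  · rintro ⟨h, hh, rfl⟩; exact ⟨⟨h, hh⟩, rfl⟩

lemma piL_mem_Lfin {x : G} : piL H x ∈ Lfin H x :=
  mem_Lfin.mpr ⟨1, one_mem H, by rw [one_mul]⟩

lemma piL_mem_Lfin_iff {x y : G} : piL H y ∈ Lfin H x ↔ dRel H x y := by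
  rw [mem_Lfin]
  constructor
  · rintro ⟨h, hh, he⟩
    rw [piL_eq] at he
    exact ⟨h, hh, (y⁻¹ * (h * x))⁻¹, inv_mem he, by group⟩
  · rintro ⟨h₁, m1, h₂, m2, rfl⟩
    exact ⟨h₁, m1, piL_mul_right (a := h₁ * x) m2⟩

lemma mem_Lfin_dL {c : G ⧸ H} {x : G} : c ∈ Lfin H x ↔ dL H c = dmk H x := by
  constructor
  · intro hc
    rw [mem_Lfin] at hc
    obtain ⟨h, hh, rfl⟩ := hc
    rw [dL_piL, dmk_eq_iff]
    exact dRel_symm ⟨h, hh, 1, one_mem H, by group⟩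
  · intro hc
    have hc' : c = piL H c.out := (Quotient.out_eq _).symm
    rw [hc']
    rw [dL, dmk_eq_iff] at hc
    exact piL_mem_Lfin_iff.mpr (dRel_symm hc)

lemma Lfin_eq_of_dRel {x y : G} (h : dRel H x y) : Lfin H x = Lfin H y := by
  ext c
  rw [mem_Lfin_dL, mem_Lfin_dL, dmk_eq_iff.mpr h]

/-- the set of right coset classes (encoded in `G ⧸ H`) in the double coset of `x` -/
noncomputable def Rfin (H : Subgroup G) (x : G) : Finset (G ⧸ H) :=
  Finset.image (fun h : ↥H => piR H (x * h)) Finset.univ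

lemma mem_Rfin {c : G ⧸ H} {x : G} : c ∈ Rfin H x ↔ ∃ h ∈ H, c = piR H (x * h) := by
  simp only [Rfin, Finset.mem_image, Finset.mem_univ, true_and]
  constructor
  · rintro ⟨h, rfl⟩; exact ⟨h, h.2, rfl⟩
  · rintro ⟨h, hh, rfl⟩; exact ⟨⟨h, hh⟩, rfl⟩

lemma Rfin_eq_Lfin_inv (x : G) : Rfin H x = Lfin H x⁻¹ := by
  ext c
  rw [mem_Rfin, mem_Lfin]
  constructor
  · rintro ⟨h, hh, rfl⟩
    exact ⟨h⁻¹, inv_mem hh, by rw [piR]; rw [mul_inv_rev]⟩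
  · rintro ⟨h, hh, rfl⟩
    exact ⟨h⁻¹, inv_mem hh, by rw [piR]; rw [mul_inv_rev, inv_inv]⟩

lemma piR_mem_Rfin {x : G} : piR H x ∈ Rfin H x :=
  mem_Rfin.mpr ⟨1, one_mem H, by rw [mul_one]⟩

lemma piR_mem_Rfin_iff {x y : G} : piR H y ∈ Rfin H x ↔ dRel H x y := by
  rw [Rfin_eq_Lfin_inv, piR, ← piL]
  rw [show (piL H y⁻¹ ∈ Lfin H x⁻¹) ↔ dRel H x⁻¹ y⁻¹ from piL_mem_Lfin_iff]
  constructor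
  · intro h
    have := dRel_inv h
    rwa [inv_inv, inv_inv] at this
  · exact dRel_inv

/-- the subgroup H ∩ xHx⁻¹ -/
def Kc (H : Subgroup G) (x : G) : Subgroup G where
  carrier := {k | k ∈ H ∧ x⁻¹ * k * x ∈ H}
  one_mem' := ⟨one_mem H, by simpa using one_mem H⟩
  mul_mem' := by
    rintro a b ⟨ha1, ha2⟩ ⟨hb1, hb2⟩
    refine ⟨mul_mem ha1 hb1, ?_⟩
    have := mul_mem ha2 hb2
    have he : x⁻¹ * a * x * (x⁻¹ * b * x) = x⁻¹ * (a * b) * x := by group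
    rwa [he] at this
  inv_mem' := by
    rintro a ⟨ha1, ha2⟩
    refine ⟨inv_mem ha1, ?_⟩
    have := inv_mem ha2
    have he : (x⁻¹ * a * x)⁻¹ = x⁻¹ * a⁻¹ * x := by group
    rwa [he] at this

lemma Kc_le (x : G) : Kc H x ≤ H := fun _ h => h.1

lemma card_Lfin_eq_quot (x : G) :
    (Lfin H x).card = Nat.card (↥H ⧸ (Kc H x).subgroupOf H) := by
  let f : ↥H ⧸ (Kc H x).subgroupOf H → {c // c ∈ Lfin H x} := fun q =>
    Quotient.liftOn' q
      (fun h : ↥H => (⟨piL H (h * x), mem_Lfin.mpr ⟨h, h.2, rfl⟩⟩ : {c // c ∈ Lfin H x}))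
      (by
        intro a b hab
        have h1 : a⁻¹ * b ∈ (Kc H x).subgroupOf H := (QuotientGroup.leftRel_apply).mp hab
        rw [Subgroup.mem_subgroupOf] at h1
        apply Subtype.ext
        show piL H (a * x) = piL H (b * x)
        rw [piL_eq]
        have h2 := h1.2
        have he : x⁻¹ * (((a⁻¹ * b : ↥H)) : G) * x = ((a : G) * x)⁻¹ * ((b : G) * x) := by
          push_cast; group
        rwa [he] at h2)
  have hbij : Function.Bijective f := by
    constructor
    · intro q r
      obtain ⟨a, rfl⟩ := QuotientGroup.mk_surjective q
      obtain ⟨b, rfl⟩ := QuotientGroup.mk_surjective r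
      intro hfab
      have h1 : piL H (a * x) = piL H (b * x) := congrArg Subtype.val hfab
      rw [piL_eq] at h1
      rw [QuotientGroup.eq, Subgroup.mem_subgroupOf]
      constructor
      · exact mul_mem (inv_mem a.2) b.2
      · have he : x⁻¹ * (((a⁻¹ * b : ↥H)) : G) * x = ((a : G) * x)⁻¹ * ((b : G) * x) := by
          push_cast; group
        rw [he]
        exact h1
    · rintro ⟨c, hc⟩
      rw [mem_Lfin] at hc
      obtain ⟨h, hh, rfl⟩ := hc
      exact ⟨QuotientGroup.mk ⟨h, hh⟩, rfl⟩
  have hcard := Nat.card_eq_of_bijective f hbij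
  rw [hcard]
  rw [Nat.card_eq_fintype_card, Fintype.card_coe]

lemma card_Kc_inv (x : G) : Nat.card (Kc H x) = Nat.card (Kc H x⁻¹) := by
  refine Nat.card_eq_of_bijective (fun k => ⟨x⁻¹ * k * x, ?_, ?_⟩) ?_
  · exact k.2.2
  · have he : (x⁻¹)⁻¹ * (x⁻¹ * (k : G) * x) * x⁻¹ = k := by group
    rw [he]; exact k.2.1
  · constructor
    · intro a b hab
      have h1 : x⁻¹ * (a : G) * x = x⁻¹ * (b : G) * x := congrArg Subtype.val hab
      ext
      have := congrArg (fun g => x * g * x⁻¹) h1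
      simpa [mul_assoc] using this
    · rintro ⟨k, hk1, hk2⟩
      refine ⟨⟨x * k * x⁻¹, ?_, ?_⟩, ?_⟩
      · simpa using hk2
      · have he : x⁻¹ * (x * k * x⁻¹) * x = k := by group
        rw [he]; exact hk1
      · ext
        show x⁻¹ * (x * k * x⁻¹) * x = k
        group

lemma card_Lfin_inv (x : G) : (Lfin H x).card = (Lfin H x⁻¹).card := by
  have l1 := Subgroup.card_eq_card_quotient_mul_card_subgroup ((Kc H x).subgroupOf H)
  have l2 := Subgroup.card_eq_card_quotient_mul_card_subgroup ((Kc H x⁻¹).subgroupOf H)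
  have e1 : Nat.card ((Kc H x).subgroupOf H) = Nat.card (Kc H x) :=
    Nat.card_congr (Subgroup.subgroupOfEquivOfLe (Kc_le x)).toEquiv
  have e2 : Nat.card ((Kc H x⁻¹).subgroupOf H) = Nat.card (Kc H x⁻¹) :=
    Nat.card_congr (Subgroup.subgroupOfEquivOfLe (Kc_le x⁻¹)).toEquiv
  rw [card_Lfin_eq_quot, card_Lfin_eq_quot]
  have hpos : 0 < Nat.card (Kc H x) := Nat.card_pos
  apply Nat.eq_of_mul_eq_mul_right hpos
  conv_rhs => rw [card_Kc_inv]
  rw [← e1, ← e2, ← l1, ← l2]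

lemma card_Rfin_eq (x : G) : (Rfin H x).card = (Lfin H x).card := by
  rw [Rfin_eq_Lfin_inv, ← card_Lfin_inv]

end NielsenAux

end Cosets
section LemA

open scoped Classical

attribute [local instance] Fintype.ofFinite

namespace NielsenAux

variable {G : Type*} [Group G] {H : Subgroup G}

lemma exists_pair {x w : G} (h : dRel H x w) :
    ∃ z : G, piL H z = piL H x ∧ piR H z = piR H w := by
  obtain ⟨h₁, m1, h₂, m2, rfl⟩ := h
  refine ⟨x * h₂, piL_mul_right m2, ?_⟩
  rw [piR_eq]
  have he : x * h₂ * (h₁ * x * h₂)⁻¹ = h₁⁻¹ := by group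
  rw [he]
  exact inv_mem m1

variable [Finite G]

lemma extend_transversal (H : Subgroup G) (V : Finset G)
    (hL : Set.InjOn (piL H) ↑V) (hR : Set.InjOn (piR H) ↑V) :
    ∃ T : Set G, IsLeftTransversal H T ∧ IsRightTransversal H T ∧ ∀ x ∈ V, x ∈ T := by
  classical
  set FL : DQ H → Finset (G ⧸ H) :=
    fun d => Finset.univ.filter (fun c => dL H c = d) with hFLdef
  have memFL : ∀ (d : DQ H) (c : G ⧸ H), c ∈ FL d ↔ dL H c = d := by
    intro d c
    simp [hFLdef]
  have hFL_Lfin : ∀ x : G, FL (dmk H x) = Lfin H x := by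
    intro x
    ext c
    rw [memFL, mem_Lfin_dL]
  have hFL_card : ∀ d, (FL d).card = (FL (dInv H d)).card := by
    intro d
    induction d using Quotient.inductionOn with
    | h x =>
      have e1 : FL (Quotient.mk (dSetoid H) x) = Lfin H x := hFL_Lfin x
      have e2 : FL (dInv H (Quotient.mk (dSetoid H) x)) = Lfin H x⁻¹ := by
        rw [show dInv H (Quotient.mk (dSetoid H) x) = dmk H x⁻¹ from rfl]
        exact hFL_Lfin x⁻¹
      rw [e1, e2]
      exact card_Lfin_inv x
  set Vl : Finset (G ⧸ H) := V.image (piL H) with hVldef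
  set Vr : Finset (G ⧸ H) := V.image (piR H) with hVrdef
  have hVl_inter : ∀ d, Vl ∩ FL d = (V.filter (fun y => dmk H y = d)).image (piL H) := by
    intro d
    ext c
    simp only [Finset.mem_inter, hVldef, Finset.mem_image, Finset.mem_filter, memFL]
    constructor
    · rintro ⟨⟨y, hy, rfl⟩, hd⟩
      exact ⟨y, ⟨hy, by rw [← dL_piL y]; exact hd⟩, rfl⟩
    · rintro ⟨y, ⟨hy, hd⟩, rfl⟩
      exact ⟨⟨y, hy, rfl⟩, by rw [dL_piL y]; exact hd⟩
  have hVr_inter : ∀ d, Vr ∩ FL (dInv H d) = (V.filter (fun y => dmk H y = d)).image (piR H) := by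
    intro d
    ext c
    simp only [Finset.mem_inter, hVrdef, Finset.mem_image, Finset.mem_filter, memFL]
    constructor
    · rintro ⟨⟨y, hy, rfl⟩, hd⟩
      refine ⟨y, ⟨hy, ?_⟩, rfl⟩
      rw [dL_piR y] at hd
      exact dInv_injective hd
    · rintro ⟨y, ⟨hy, hd⟩, rfl⟩
      exact ⟨⟨y, hy, rfl⟩, by rw [dL_piR y, hd]⟩
  have hused_card : ∀ d, (Vl ∩ FL d).card = (Vr ∩ FL (dInv H d)).card := by
    intro d
    rw [hVl_inter, hVr_inter]
    rw [Finset.card_image_of_injOn (hL.mono (by intro y hy; exact Finset.filter_subset _ _ hy))]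
    rw [Finset.card_image_of_injOn (hR.mono (by intro y hy; exact Finset.filter_subset _ _ hy))]
  set REM : DQ H → Finset (G ⧸ H) := fun d => FL d \ Vl with hREMdef
  set REMc : DQ H → Finset (G ⧸ H) := fun d => FL (dInv H d) \ Vr with hREMcdef
  have hREM_card : ∀ d, (REM d).card = (REMc d).card := by
    intro d
    have c1 : FL d \ Vl = FL d \ (Vl ∩ FL d) := by
      rw [Finset.sdiff_inter_self_right]
    have c2 : FL (dInv H d) \ Vr = FL (dInv H d) \ (Vr ∩ FL (dInv H d)) := by
      rw [Finset.sdiff_inter_self_right]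
    show (FL d \ Vl).card = (FL (dInv H d) \ Vr).card
    rw [c1, c2, Finset.card_sdiff_of_subset (Finset.inter_subset_right),
      Finset.card_sdiff_of_subset (Finset.inter_subset_right), hFL_card d, hused_card d]
  have hE : ∀ d, Nonempty ({c // c ∈ REM d} ≃ {c // c ∈ REMc d}) :=
    fun d => ⟨Finset.equivOfCardEq (hREM_card d)⟩
  set E : ∀ d, {c // c ∈ REM d} ≃ {c // c ∈ REMc d} := fun d => (hE d).some with hEdef
  set E' : DQ H → (G ⧸ H) → (G ⧸ H) := fun d c =>
    if h : c ∈ REM d then ((E d) ⟨c, h⟩ : _).val else c with hE'def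
  have hE'1 : ∀ d c, c ∈ REM d → E' d c ∈ REMc d := by
    intro d c hc
    rw [hE'def]
    simp only [dif_pos hc]
    exact ((E d) ⟨c, hc⟩).2
  have hE'inj : ∀ d c c', c ∈ REM d → c' ∈ REM d → E' d c = E' d c' → c = c' := by
    intro d c c' hc hc' he
    rw [hE'def] at he
    simp only [dif_pos hc, dif_pos hc'] at he
    exact congrArg Subtype.val ((E d).injective (Subtype.ext he))
  -- the chosen representative of a used left-coset class
  set pk : (G ⧸ H) → G := fun c => if h : ∃ x ∈ V, piL H x = c then h.choose else 1 with hpkdef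
  have hpk : ∀ c ∈ Vl, pk c ∈ V ∧ piL H (pk c) = c := by
    intro c hc
    rw [hVldef, Finset.mem_image] at hc
    obtain ⟨x, hx, rfl⟩ := hc
    have hex : ∃ x' ∈ V, piL H x' = piL H x := ⟨x, hx, rfl⟩
    rw [hpkdef]
    simp only [dif_pos hex]
    exact ⟨hex.choose_spec.1, hex.choose_spec.2⟩
  have hpk_eq : ∀ x ∈ V, pk (piL H x) = x := by
    intro x hx
    have hm : piL H x ∈ Vl := Finset.mem_image_of_mem _ hx
    exact hL (hpk _ hm).1 hx (hpk _ hm).2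
  have hmemREM : ∀ c : G ⧸ H, c ∉ Vl → c ∈ REM (dL H c) := by
    intro c hc
    refine Finset.mem_sdiff.mpr ⟨(memFL _ c).mpr rfl, hc⟩
  set σ : (G ⧸ H) → (G ⧸ H) := fun c =>
    if c ∈ Vl then piR H (pk c) else E' (dL H c) c with hσdef
  have hσV : ∀ x ∈ V, σ (piL H x) = piR H x := by
    intro x hx
    have hm : piL H x ∈ Vl := Finset.mem_image_of_mem _ hx
    rw [hσdef]
    simp only [if_pos hm]
    rw [hpk_eq x hx]
  have hσ_pos : ∀ c ∈ Vl, σ c = piR H (pk c) := by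
    intro c hc; rw [hσdef]; simp only [if_pos hc]
  have hσ_neg : ∀ c, c ∉ Vl → σ c = E' (dL H c) c := by
    intro c hc; rw [hσdef]; simp only [if_neg hc]
  have hσ_mem_Vr : ∀ c ∈ Vl, σ c ∈ Vr := by
    intro c hc
    rw [hσ_pos c hc]
    exact Finset.mem_image_of_mem _ (hpk c hc).1
  have hσ_not_Vr : ∀ c, c ∉ Vl → σ c ∉ Vr := by
    intro c hc
    rw [hσ_neg c hc]
    exact (Finset.mem_sdiff.mp (hE'1 _ _ (hmemREM c hc))).2
  have hσd : ∀ c, dL H (σ c) = dInv H (dL H c) := by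
    intro c
    by_cases hc : c ∈ Vl
    · rw [hσ_pos c hc]
      have h1 : c = piL H (pk c) := (hpk c hc).2.symm
      rw [dL_piR]
      conv_rhs => rw [h1, dL_piL]
    · rw [hσ_neg c hc]
      exact (memFL _ _).mp (Finset.mem_sdiff.mp (hE'1 _ _ (hmemREM c hc))).1
  have hσinj : Function.Injective σ := by
    intro c c' he
    by_cases hc : c ∈ Vl <;> by_cases hc' : c' ∈ Vl
    · have h1 : piR H (pk c) = piR H (pk c') := by
        rw [← hσ_pos c hc, ← hσ_pos c' hc', he]
      have : pk c = pk c' := hR (hpk c hc).1 (hpk c' hc').1 h1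
      rw [← (hpk c hc).2, ← (hpk c' hc').2, this]
    · exact absurd (he ▸ hσ_mem_Vr c hc) (hσ_not_Vr c' hc')
    · exact absurd (he.symm ▸ hσ_mem_Vr c' hc') (hσ_not_Vr c hc)
    · have hd : dL H c = dL H c' := by
        have h2 := hσd c
        rw [he, hσd c'] at h2
        exact dInv_injective h2.symm
      have he2 : E' (dL H c) c = E' (dL H c) c' := by
        rw [← hσ_neg c hc, he, hσ_neg c' hc', ← hd]
      exact hE'inj (dL H c) c c' (hmemREM c hc) (hd ▸ hmemREM c' hc') he2
  have hσbij : Function.Bijective σ := (Finite.injective_iff_bijective).mp hσinj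
  -- choose actual representatives
  have hex : ∀ c : G ⧸ H, c ∉ Vl → ∃ z : G, piL H z = c ∧ piR H z = σ c := by
    intro c hc
    have h1 : piL H c.out = c := Quotient.out_eq c
    have h2 : piL H ((σ c).out) = σ c := Quotient.out_eq (σ c)
    have hd1 : dL H c = dmk H c.out := by rw [← h1, dL_piL, h1]
    have hd2 : dL H (σ c) = dmk H ((σ c).out) := by rw [← h2, dL_piL, h2]
    have hd : dmk H ((σ c).out) = dmk H (c.out)⁻¹ := by
      rw [← hd2, hσd c, hd1]
      rfl
    have hrel : dRel H c.out ((σ c).out)⁻¹ := by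
      have := dRel_inv (dmk_eq_iff.mp hd)
      rw [inv_inv] at this
      exact dRel_symm this
    obtain ⟨z, hz1, hz2⟩ := exists_pair hrel
    refine ⟨z, by rw [hz1, h1], ?_⟩
    rw [hz2]
    show piL H (((σ c).out)⁻¹)⁻¹ = σ c
    rw [inv_inv]
    exact h2
  set t : (G ⧸ H) → G := fun c =>
    if hc : c ∈ Vl then pk c else (hex c hc).choose with htdef
  have ht1 : ∀ c, piL H (t c) = c := by
    intro c
    by_cases hc : c ∈ Vl
    · rw [htdef]; simp only [dif_pos hc]; exact (hpk c hc).2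
    · rw [htdef]; simp only [dif_neg hc]; exact (hex c hc).choose_spec.1
  have ht2 : ∀ c, piR H (t c) = σ c := by
    intro c
    by_cases hc : c ∈ Vl
    · rw [htdef]; simp only [dif_pos hc]; exact (hσ_pos c hc).symm
    · rw [htdef]; simp only [dif_neg hc]; exact (hex c hc).choose_spec.2
  have htV : ∀ x ∈ V, t (piL H x) = x := by
    intro x hx
    have hm : piL H x ∈ Vl := Finset.mem_image_of_mem _ hx
    rw [htdef]
    simp only [dif_pos hm]
    exact hpk_eq x hx
  refine ⟨Set.range t, ?_, ?_, ?_⟩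
  · intro g
    refine ⟨t (piL H g), ⟨⟨piL H g, rfl⟩, ht1 _⟩, ?_⟩
    rintro t' ⟨⟨c, rfl⟩, hc⟩
    have : c = piL H g := by rw [← ht1 c]; exact hc
    rw [this]
  · intro g
    obtain ⟨c, hc⟩ := hσbij.2 (piR H g)
    refine ⟨t c, ⟨⟨c, rfl⟩, ?_⟩, ?_⟩
    · show piR H (t c) = piR H g
      rw [ht2 c, hc]
    · rintro t' ⟨⟨c', rfl⟩, hc'⟩
      have h1 : σ c' = piR H g := by rw [← ht2 c']; exact hc'
      have : c' = c := hσinj (by rw [h1, hc])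
      rw [this]
  · intro x hx
    exact ⟨piL H x, htV x hx⟩

end NielsenAux

end LemA
section Struct

namespace NielsenAux

lemma zmod2_dich {p : ℕ} (hp : p.Prime) (u v : ZMod p × ZMod p) :
    (∃ c : ZMod p, u = c • v) ∨ (∃ c : ZMod p, v = c • u) ∨
      (∀ w : ZMod p × ZMod p, ∃ i j : ZMod p, w = i • u + j • v) := by
  haveI : Fact p.Prime := ⟨hp⟩
  by_cases hv : v = 0
  · right; left; exact ⟨0, by rw [hv, zero_smul]⟩
  by_cases hu : u = 0
  · left; exact ⟨0, by rw [hu, zero_smul]⟩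
  obtain ⟨a, b⟩ := u
  obtain ⟨c, d⟩ := v
  by_cases hdet : a * d - b * c = 0
  · -- dependent
    by_cases hc : c = 0
    · have hd : d ≠ 0 := by
        intro h0
        exact hv (by rw [hc, h0]; rfl)
      have ha : a = 0 := by
        have : a * d = 0 := by
          have := hdet
          rw [hc, mul_zero, sub_zero] at this
          exact this
        rcases mul_eq_zero.mp this with h | h
        · exact h
        · exact absurd h hd
      left
      refine ⟨b / d, ?_⟩
      have e1 : b / d * c = a := by rw [hc, mul_zero, ha]
      have e2 : b / d * d = b := div_mul_cancel₀ b hd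
      ext
      · simpa using e1.symm
      · simpa using e2.symm
    · left
      refine ⟨a / c, ?_⟩
      have e1 : a / c * c = a := div_mul_cancel₀ a hc
      have e2 : a / c * d = b := by
        field_simp
        have : a * d = b * c := by
          have := sub_eq_zero.mp hdet
          linear_combination this
        linear_combination this
      ext
      · simpa using e1.symm
      · simpa using e2.symm
  · right; right
    intro w
    obtain ⟨w1, w2⟩ := w
    refine ⟨(w1 * d - w2 * c) / (a * d - b * c), (a * w2 - b * w1) / (a * d - b * c), ?_⟩
    have e1 : (w1 * d - w2 * c) / (a * d - b * c) * a
        + (a * w2 - b * w1) / (a * d - b * c) * c = w1 := by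
      rw [div_mul_eq_mul_div, div_mul_eq_mul_div, ← add_div, div_eq_iff hdet]
      ring
    have e2 : (w1 * d - w2 * c) / (a * d - b * c) * b
        + (a * w2 - b * w1) / (a * d - b * c) * d = w2 := by
      rw [div_mul_eq_mul_div, div_mul_eq_mul_div, ← add_div, div_eq_iff hdet]
      ring
    ext
    · simpa using e1.symm
    · simpa using e2.symm

variable {G : Type*} [Group G] {H : Subgroup G} {p : ℕ}

/-- the coordinate map -/
def wv (e : ↥H ≃* Multiplicative (ZMod p) × Multiplicative (ZMod p)) (h : ↥H) :
    ZMod p × ZMod p := ((e h).1.toAdd, (e h).2.toAdd)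

lemma wv_mul (e : ↥H ≃* Multiplicative (ZMod p) × Multiplicative (ZMod p)) (a b : ↥H) :
    wv e (a * b) = wv e a + wv e b := by
  simp [wv, Prod.ext_iff]

lemma wv_one (e : ↥H ≃* Multiplicative (ZMod p) × Multiplicative (ZMod p)) :
    wv e 1 = 0 := by
  simp [wv, Prod.ext_iff]

lemma wv_pow (e : ↥H ≃* Multiplicative (ZMod p) × Multiplicative (ZMod p)) (a : ↥H) (n : ℕ) :
    wv e (a ^ n) = n • wv e a := by
  induction n with
  | zero => simp [wv_one]
  | succ n ih => rw [pow_succ, wv_mul, ih, succ_nsmul]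

lemma wv_inj (e : ↥H ≃* Multiplicative (ZMod p) × Multiplicative (ZMod p)) :
    Function.Injective (wv e) := by
  intro a b hab
  apply e.injective
  rw [wv, wv, Prod.ext_iff] at hab
  obtain ⟨h1, h2⟩ := hab
  ext
  · exact h1
  · exact h2

lemma wv_smul_nat (e : ↥H ≃* Multiplicative (ZMod p) × Multiplicative (ZMod p))
    (c : ZMod p) (a : ↥H) [NeZero p] : c • wv e a = wv e (a ^ c.val) := by
  rw [wv_pow]
  rw [← Nat.cast_smul_eq_nsmul (ZMod p) c.val (wv e a), ZMod.natCast_val, ZMod.cast_id]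

section withE

variable (hp : p.Prime) (e : ↥H ≃* Multiplicative (ZMod p) × Multiplicative (ZMod p))

include hp e

lemma H_pow_p : ∀ g ∈ H, g ^ p = 1 := by
  intro g hg
  have h1 : (⟨g, hg⟩ : ↥H) ^ p = 1 := by
    apply wv_inj e
    rw [wv_pow, wv_one]
    have : (p : ZMod p) = 0 := ZMod.natCast_self p
    ext
    · show p • (wv e ⟨g, hg⟩).1 = 0
      rw [nsmul_eq_mul, this, zero_mul]
    · show p • (wv e ⟨g, hg⟩).2 = 0
      rw [nsmul_eq_mul, this, zero_mul]
  calc g ^ p = ((⟨g, hg⟩ : ↥H) ^ p : ↥H) := by rw [SubgroupClass.coe_pow]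
  _ = ((1 : ↥H) : G) := by rw [h1]
  _ = 1 := rfl

lemma H_comm : ∀ a ∈ H, ∀ b ∈ H, a * b = b * a := by
  intro a ha b hb
  have h1 : (⟨a, ha⟩ : ↥H) * ⟨b, hb⟩ = ⟨b, hb⟩ * ⟨a, ha⟩ := by
    apply wv_inj e
    rw [wv_mul, wv_mul, add_comm]
  exact congrArg Subtype.val h1

lemma H_card : Nat.card ↥H = p ^ 2 := by
  haveI : Fact p.Prime := ⟨hp⟩
  have h1 := Nat.card_congr e.toEquiv
  rw [h1, Nat.card_prod]
  have h2 : Nat.card (Multiplicative (ZMod p)) = p := by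
    rw [Nat.card_congr Multiplicative.toAdd, Nat.card_zmod]
  rw [h2, sq]

lemma H_dich : ∀ a ∈ H, ∀ b ∈ H,
    (∃ k : ℕ, a = b ^ k) ∨ (∃ k : ℕ, b = a ^ k) ∨
      (∀ w ∈ H, ∃ i j : ℕ, w = a ^ i * b ^ j) := by
  haveI : Fact p.Prime := ⟨hp⟩
  haveI : NeZero p := ⟨hp.ne_zero⟩
  intro a ha b hb
  rcases zmod2_dich hp (wv e ⟨a, ha⟩) (wv e ⟨b, hb⟩) with ⟨c, hc⟩ | ⟨c, hc⟩ | hspan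
  · left
    refine ⟨c.val, ?_⟩
    rw [wv_smul_nat] at hc
    have := wv_inj e hc
    calc a = ((⟨a, ha⟩ : ↥H) : G) := rfl
    _ = (((⟨b, hb⟩ : ↥H) ^ c.val : ↥H) : G) := by rw [← this]
    _ = b ^ c.val := by rw [SubgroupClass.coe_pow]
  · right; left
    refine ⟨c.val, ?_⟩
    rw [wv_smul_nat] at hc
    have := wv_inj e hc
    calc b = ((⟨b, hb⟩ : ↥H) : G) := rfl
    _ = (((⟨a, ha⟩ : ↥H) ^ c.val : ↥H) : G) := by rw [← this]
    _ = a ^ c.val := by rw [SubgroupClass.coe_pow]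
  · right; right
    intro w hw
    obtain ⟨i, j, hij⟩ := hspan (wv e ⟨w, hw⟩)
    refine ⟨i.val, j.val, ?_⟩
    rw [wv_smul_nat, wv_smul_nat, ← wv_mul] at hij
    have := wv_inj e hij
    calc w = ((⟨w, hw⟩ : ↥H) : G) := rfl
    _ = (((⟨a, ha⟩ : ↥H) ^ i.val * (⟨b, hb⟩ : ↥H) ^ j.val : ↥H) : G) := by rw [← this]
    _ = a ^ i.val * b ^ j.val := by push_cast; rfl

lemma pow_fix {t : G} (ht : t ∈ H) (m : ℕ) : t ^ m * t ^ (1 + m * (p - 1)) = t := by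
  rw [← pow_add]
  have harith : m + (1 + m * (p - 1)) = 1 + m * p := by
    have h1 : 1 + (p - 1) = p := Nat.add_sub_cancel' hp.one_le
    calc m + (1 + m * (p - 1)) = m * 1 + m * (p - 1) + 1 := by ring
    _ = m * (1 + (p - 1)) + 1 := by ring
    _ = 1 + m * p := by rw [h1]; ring
  rw [harith, pow_add, pow_one, mul_comm m p, pow_mul, H_pow_p hp e t ht, one_pow, mul_one]

lemma killer {A B g : G} (hA : A ∈ H) (hB : B ∈ H)
    (i j : ℕ) (hg : g = A ^ i * B ^ j) :
    g * (B ^ (j * (p - 1)) * A ^ (i * (p - 1))) = 1 := by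
  have hBp : B ^ j * B ^ (j * (p - 1)) = 1 := by
    rw [← pow_add]
    have harith : j + j * (p - 1) = j * p := by
      have h1 : 1 + (p - 1) = p := Nat.add_sub_cancel' hp.one_le
      calc j + j * (p - 1) = j * (1 + (p - 1)) := by ring
      _ = j * p := by rw [h1]
    rw [harith, mul_comm j p, pow_mul, H_pow_p hp e B hB, one_pow]
  have hAp : A ^ i * A ^ (i * (p - 1)) = 1 := by
    rw [← pow_add]
    have harith : i + i * (p - 1) = i * p := by
      have h1 : 1 + (p - 1) = p := Nat.add_sub_cancel' hp.one_le
      calc i + i * (p - 1) = i * (1 + (p - 1)) := by ring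
      _ = i * p := by rw [h1]
    rw [harith, mul_comm i p, pow_mul, H_pow_p hp e A hA, one_pow]
  calc g * (B ^ (j * (p - 1)) * A ^ (i * (p - 1)))
      = A ^ i * (B ^ j * B ^ (j * (p - 1))) * A ^ (i * (p - 1)) := by rw [hg]; group
  _ = A ^ i * A ^ (i * (p - 1)) := by rw [hBp]; group
  _ = 1 := hAp

lemma span_shift {A B : G} (hA : A ∈ H) (hB : B ∈ H)
    (hspan : ∀ w ∈ H, ∃ i j : ℕ, w = A ^ i * B ^ j) :
    ∀ w ∈ H, ∃ i j : ℕ, w = (A * B) ^ i * B ^ j := by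
  intro w hw
  obtain ⟨i, j, hij⟩ := hspan w hw
  refine ⟨i, j + i * (p - 1), ?_⟩
  have hAB : Commute A B := H_comm hp e A hA B hB
  rw [hAB.mul_pow]
  have hBB : B ^ i * B ^ (j + i * (p - 1)) = B ^ j := by
    rw [← pow_add]
    have harith : i + (j + i * (p - 1)) = j + i * p := by
      have h1 : 1 + (p - 1) = p := Nat.add_sub_cancel' hp.one_le
      calc i + (j + i * (p - 1)) = j + i * (1 + (p - 1)) := by ring
      _ = j + i * p := by rw [h1]
    rw [harith, pow_add, mul_comm i p, pow_mul, H_pow_p hp e B hB, one_pow, mul_one]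
  rw [mul_assoc, hBB, hij]

lemma all_to {g t : G} (hg : g ∈ H) (hrel : ∃ m : ℕ, t = g ^ m) :
    ∀ k, NielsenEquiv (g ::ₘ Multiset.replicate k t) (Multiset.replicate (k + 1) g) := by
  obtain ⟨m, rfl⟩ := hrel
  intro k
  induction k with
  | zero => exact equiv_refl _
  | succ k ih =>
      rw [Multiset.replicate_succ]
      rw [Multiset.cons_swap]
      have hmem : g ∈ g ::ₘ Multiset.replicate k (g ^ m) := Multiset.mem_cons_self _ _
      have hcl : g ^ (1 + m * (p - 1)) ∈
          Subgroup.closure {x : G | x ∈ g ::ₘ Multiset.replicate k (g ^ m)} :=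
        pow_mem (mem_closure_of_mem hmem) _
      have step := equiv_smul_right hcl (g ^ m)
      rw [pow_fix hp e hg m] at step
      refine equiv_trans step ?_
      rw [Multiset.replicate_succ]
      exact equiv_cons_congr g ih

lemma gaussian : ∀ M : Multiset G, (∀ x ∈ M, x ∈ H) →
    (∃ t₀, t₀ ∈ H ∧ ∃ k, NielsenEquiv M (Multiset.replicate k t₀)) ∨
    (∃ A B, A ∈ H ∧ B ∈ H ∧ (∀ w ∈ H, ∃ i j : ℕ, w = A ^ i * B ^ j) ∧
      ∃ k, NielsenEquiv M (A ::ₘ B ::ₘ Multiset.replicate k A)) := by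
  intro M
  induction M using Multiset.induction_on with
  | empty => exact fun _ => Or.inl ⟨1, one_mem H, 0, equiv_refl _⟩
  | cons g M ih =>
      intro hmem
      have hg : g ∈ H := hmem g (Multiset.mem_cons_self _ _)
      have hM : ∀ x ∈ M, x ∈ H := fun x hx => hmem x (Multiset.mem_cons_of_mem hx)
      rcases ih hM with ⟨t, htH, k, hMt⟩ | ⟨A, B, hA, hB, hspan, k, hMs⟩
      · have step1 : NielsenEquiv (g ::ₘ M) (g ::ₘ Multiset.replicate k t) :=
          equiv_cons_congr g hMt
        rcases Nat.eq_zero_or_pos k with rfl | hk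
        · left
          refine ⟨g, hg, 1, ?_⟩
          exact step1
        rcases H_dich hp e g hg t htH with ⟨m, rfl⟩ | hcase | hspan
        · -- g is a power of t : absorb into t
          left
          refine ⟨t, htH, k + 1, ?_⟩
          refine equiv_trans step1 ?_
          have hmem2 : t ∈ Multiset.replicate k t := by
            rw [Multiset.mem_replicate]; exact ⟨by omega, rfl⟩
          have hcl : t ^ (1 + m * (p - 1)) ∈
              Subgroup.closure {x : G | x ∈ Multiset.replicate k t} :=
            pow_mem (mem_closure_of_mem hmem2) _
          have step2 := equiv_smul_right hcl (t ^ m)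
          rw [pow_fix hp e htH m] at step2
          refine equiv_trans step2 ?_
          rw [Multiset.replicate_succ]
          exact equiv_refl _
        · rcases hcase with ⟨m, htg⟩
          left
          refine ⟨g, hg, k + 1, ?_⟩
          refine equiv_trans step1 ?_
          exact all_to hp e hg ⟨m, htg⟩ k
        · right
          obtain ⟨k', rfl⟩ : ∃ k', k = k' + 1 := ⟨k - 1, by omega⟩
          refine ⟨t, g, htH, hg, ?_, k', ?_⟩
          · intro w hw
            obtain ⟨i, j, hij⟩ := hspan w hw
            exact ⟨j, i, by rw [hij, H_comm hp e (g ^ i) (pow_mem hg i) (t ^ j) (pow_mem htH j)]⟩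
          · refine equiv_trans step1 (equiv_of_eq ?_)
            rw [Multiset.replicate_succ, Multiset.cons_swap]
      · right
        refine ⟨A, B, hA, hB, hspan, k + 1, ?_⟩
        have step1 : NielsenEquiv (g ::ₘ M) (g ::ₘ A ::ₘ B ::ₘ Multiset.replicate k A) :=
          equiv_cons_congr g hMs
        refine equiv_trans step1 ?_
        obtain ⟨i, j, hij⟩ := hspan g hg
        set base := A ::ₘ B ::ₘ Multiset.replicate k A with hbase
        have hmA : A ∈ base := Multiset.mem_cons_self _ _
        have hmB : B ∈ base := Multiset.mem_cons_of_mem (Multiset.mem_cons_self _ _)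
        have hcl1 : B ^ (j * (p - 1)) * A ^ (i * (p - 1)) ∈
            Subgroup.closure {x : G | x ∈ base} :=
          mul_mem (pow_mem (mem_closure_of_mem hmB) _)
            (pow_mem (mem_closure_of_mem hmA) _)
        have step2 := equiv_smul_right hcl1 g
        rw [show g * (B ^ (j * (p - 1)) * A ^ (i * (p - 1))) = 1 from killer hp e hA hB i j hij]
          at step2
        refine equiv_trans step2 ?_
        have hclA : A ∈ Subgroup.closure {x : G | x ∈ base} := mem_closure_of_mem hmA
        have step3 := equiv_smul_left hclA 1
        rw [mul_one] at step3
        refine equiv_trans step3 ?_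
        apply equiv_of_eq
        rw [hbase, Multiset.replicate_succ]
        exact congrArg (A ::ₘ ·) (Multiset.cons_swap A B (Multiset.replicate k A))

end withE

end NielsenAux

end Struct
section Phase0

namespace NielsenAux

variable {G : Type*} [Group G]

lemma exists_dup_of_not_nodup_map {α β : Type*} {f : α → β} :
    ∀ {M : Multiset α}, ¬(M.map f).Nodup → ∃ x ∈ M, ∃ y ∈ M.erase x, f x = f y := by
  intro M
  induction M using Multiset.induction_on with
  | empty => intro h; simp at h
  | cons a M ih =>
      intro h
      rw [Multiset.map_cons, Multiset.nodup_cons] at h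
      by_cases h1 : f a ∈ M.map f
      · rw [Multiset.mem_map] at h1
        obtain ⟨y, hy, hfy⟩ := h1
        exact ⟨a, Multiset.mem_cons_self _ _, y,
          by rw [Multiset.erase_cons_head]; exact hy, hfy.symm⟩
      · have h2 : ¬(M.map f).Nodup := by tauto
        obtain ⟨x, hx, y, hy, hf⟩ := ih h2
        refine ⟨x, Multiset.mem_cons_of_mem hx, y, ?_, hf⟩
        by_cases hxa : x = a
        · subst hxa
          rw [Multiset.erase_cons_head]
          exact Multiset.mem_of_mem_erase hy
        · rw [Multiset.erase_cons_tail_of_mem hx]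
          exact Multiset.mem_cons_of_mem hy
  
lemma mem_erase_symm {α : Type*} [DecidableEq α] {S : Multiset α} {x y : α}
    (hx : x ∈ S) (hy : y ∈ S.erase x) : x ∈ S.erase y := by
  by_cases hxy : x = y
  · subst hxy; exact hy
  · exact (Multiset.mem_erase_of_ne hxy).mpr hx

open scoped Classical in
lemma phase0 (H : Subgroup G) :
    ∀ (n : ℕ) (S : Multiset G), (S.filter (fun x => x ∉ H)).card ≤ n →
    ∃ S', NielsenEquiv S S' ∧
      ((S'.filter (fun x => x ∉ H)).map (piL H)).Nodup ∧
      ((S'.filter (fun x => x ∉ H)).map (piR H)).Nodup := by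
  intro n
  induction n with
  | zero =>
      intro S hcard
      have h0 : S.filter (fun x => x ∉ H) = 0 := by
        rw [← Multiset.card_eq_zero]
        omega
      exact ⟨S, equiv_refl S, by rw [h0]; simp, by rw [h0]; simp⟩
  | succ n ih =>
      intro S hcard
      by_cases hL : ((S.filter (fun x => x ∉ H)).map (piL H)).Nodup
      · by_cases hR : ((S.filter (fun x => x ∉ H)).map (piR H)).Nodup
        · exact ⟨S, equiv_refl S, hL, hR⟩
        · obtain ⟨x, hx, y, hy, hf⟩ := exists_dup_of_not_nodup_map hR
          have hxS : x ∈ S := (Multiset.mem_filter.mp hx).1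
          have hxH : x ∉ H := (Multiset.mem_filter.mp hx).2
          have hyE : y ∈ S.erase x :=
            Multiset.mem_of_le (Multiset.erase_le_erase x (Multiset.filter_le _ S)) hy
          have hmem : x * y⁻¹ ∈ H := piR_eq.mp hf
          have hstep : NielsenEquiv S ((x * y⁻¹) ::ₘ S.erase x) := by
            conv_lhs => rw [← Multiset.cons_erase hxS]
            exact equiv_mulr_inv x hyE
          have hcard2 : (((x * y⁻¹) ::ₘ S.erase x).filter (fun x => x ∉ H)).card ≤ n := by
            rw [Multiset.filter_cons_of_neg (p := fun z => z ∉ H) (S.erase x) (not_not_intro hmem)]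
            have he : S.filter (fun x => x ∉ H) = x ::ₘ (S.erase x).filter (fun x => x ∉ H) := by
              conv_lhs => rw [← Multiset.cons_erase hxS]
              rw [Multiset.filter_cons_of_pos (p := fun z => z ∉ H) (S.erase x) hxH]
            have := hcard
            rw [he, Multiset.card_cons] at this
            omega
          obtain ⟨S', he1, he2, he3⟩ := ih _ hcard2
          exact ⟨S', equiv_trans hstep he1, he2, he3⟩
      · obtain ⟨x, hx, y, hy, hf⟩ := exists_dup_of_not_nodup_map hL
        have hxS : x ∈ S := (Multiset.mem_filter.mp hx).1
        have hxH : x ∉ H := (Multiset.mem_filter.mp hx).2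
        have hyE : y ∈ S.erase x :=
          Multiset.mem_of_le (Multiset.erase_le_erase x (Multiset.filter_le _ S)) hy
        have hmem : x⁻¹ * y ∈ H := piL_eq.mp hf
        -- replace the x-occurrence? No: replace x by y⁻¹? Use: x ↦ y⁻¹ * x? then value y⁻¹x ∈ H?
        -- piL x = piL y gives x⁻¹ y ∈ H; we replace the *x*-occurrence by x * (x⁻¹ y)?? that's y.
        -- instead replace x-occurrence g := x by h⁻¹ * g with h := y : y⁻¹ * x ∈ H since (x⁻¹y)⁻¹ ∈ H
        have hmem' : y⁻¹ * x ∈ H := by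
          have := inv_mem hmem
          simpa using this
        have hstep : NielsenEquiv S ((y⁻¹ * x) ::ₘ S.erase x) := by
          conv_lhs => rw [← Multiset.cons_erase hxS]
          exact equiv_mull_inv x hyE
        have hcard2 : (((y⁻¹ * x) ::ₘ S.erase x).filter (fun x => x ∉ H)).card ≤ n := by
          rw [Multiset.filter_cons_of_neg (p := fun z => z ∉ H) (S.erase x) (not_not_intro hmem')]
          have he : S.filter (fun x => x ∉ H) = x ::ₘ (S.erase x).filter (fun x => x ∉ H) := by
            conv_lhs => rw [← Multiset.cons_erase hxS]
            rw [Multiset.filter_cons_of_pos (p := fun z => z ∉ H) (S.erase x) hxH]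
          have := hcard
          rw [he, Multiset.card_cons] at this
          omega
        obtain ⟨S', he1, he2, he3⟩ := ih _ hcard2
        exact ⟨S', equiv_trans hstep he1, he2, he3⟩

end NielsenAux

end Phase0
section Crunch

open scoped Classical

attribute [local instance] Fintype.ofFinite

namespace NielsenAux

variable {G : Type*} [Group G] {H : Subgroup G} {p : ℕ}

/-- pairwise injectivity of coset classes on a multiset -/
def PairInj (H : Subgroup G) (M : Multiset G) : Prop :=
  ∀ a ∈ M, ∀ b ∈ M, (piL H a = piL H b → a = b) ∧ (piR H a = piR H b → a = b)

lemma pairinj_cons {z : G} {base : Multiset G} (hbp : PairInj H base)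
    (hzL : ∀ w ∈ base, piL H z ≠ piL H w) (hzR : ∀ w ∈ base, piR H z ≠ piR H w) :
    PairInj H (z ::ₘ base) := by
  intro a ha b hb
  rw [Multiset.mem_cons] at ha hb
  rcases ha with rfl | ha <;> rcases hb with rfl | hb
  · exact ⟨fun _ => rfl, fun _ => rfl⟩
  · exact ⟨fun h => absurd h (hzL b hb), fun h => absurd h (hzR b hb)⟩
  · exact ⟨fun h => absurd h.symm (hzL a ha), fun h => absurd h.symm (hzR a ha)⟩
  · exact hbp a ha b hb

lemma mem_H_of_piL {a b : G} (ha : a ∈ H) (h : piL H a = piL H b) : b ∈ H := by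
  rw [piL_eq] at h
  have := mul_mem ha h
  rwa [mul_inv_cancel_left] at this

lemma mem_H_of_piR {a b : G} (ha : a ∈ H) (h : piR H a = piR H b) : b ∈ H := by
  rw [piR_eq] at h
  have := mul_mem (inv_mem h) ha
  have he : (a * b⁻¹)⁻¹ * a = b := by group
  rwa [he] at this

lemma base_pairinj {A : G} (hA : A ∈ H) {k : ℕ} {Sout : Multiset G}
    (ho1 : ∀ x ∈ Sout, x ∉ H)
    (ho2 : (Sout.map (piL H)).Nodup) (ho3 : (Sout.map (piR H)).Nodup) :
    PairInj H (Multiset.replicate k A + Sout) := by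
  intro a ha b hb
  rw [Multiset.mem_add] at ha hb
  rcases ha with ha | ha <;> rcases hb with hb | hb
  · rw [Multiset.eq_of_mem_replicate ha, Multiset.eq_of_mem_replicate hb]
    exact ⟨fun _ => rfl, fun _ => rfl⟩
  · have haA : a = A := Multiset.eq_of_mem_replicate ha
    subst haA
    constructor
    · intro h; exact absurd (mem_H_of_piL hA h) (ho1 b hb)
    · intro h; exact absurd (mem_H_of_piR hA h) (ho1 b hb)
  · have hbA : b = A := Multiset.eq_of_mem_replicate hb
    subst hbA
    constructor
    · intro h; exact absurd (mem_H_of_piL hA h.symm) (ho1 a ha)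
    · intro h; exact absurd (mem_H_of_piR hA h.symm) (ho1 a ha)
  · exact ⟨fun h => Multiset.inj_on_of_nodup_map ho2 a ha b hb h,
      fun h => Multiset.inj_on_of_nodup_map ho3 a ha b hb h⟩

lemma span_mem_closure {A B : G} {M : Multiset G} (hAm : A ∈ M) (hBm : B ∈ M)
    (hspan : ∀ w ∈ H, ∃ i j : ℕ, w = A ^ i * B ^ j) :
    ∀ w ∈ H, w ∈ Subgroup.closure {z : G | z ∈ M} := by
  intro w hw
  obtain ⟨i, j, rfl⟩ := hspan w hw
  exact mul_mem (pow_mem (mem_closure_of_mem hAm) i) (pow_mem (mem_closure_of_mem hBm) j)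

lemma move_each (base : Multiset G) (f : G → G) :
    ∀ N : Multiset G, (∀ y ∈ N, ∃ u v : G,
      u ∈ Subgroup.closure {z : G | z ∈ base} ∧ v ∈ Subgroup.closure {z : G | z ∈ base} ∧
      f y = u * y * v) →
    NielsenEquiv (N + base) (Multiset.map f N + base) := by
  intro N
  induction N using Multiset.induction_on with
  | empty => intro _; rw [Multiset.map_zero]; exact equiv_refl _
  | cons y N ih =>
      intro hf
      obtain ⟨u, v, hu, hv, hfy⟩ := hf y (Multiset.mem_cons_self _ _)
      have hmono : Subgroup.closure {z : G | z ∈ base} ≤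
          Subgroup.closure {z : G | z ∈ N + base} :=
        Subgroup.closure_mono (fun z hz => Multiset.mem_add.mpr (Or.inr hz))
      rw [Multiset.cons_add]
      have step := equiv_sandwich (hmono hu) (hmono hv) y
      rw [← hfy] at step
      refine equiv_trans step ?_
      rw [Multiset.map_cons, Multiset.cons_add]
      exact equiv_cons_congr _ (ih (fun y' hy' => hf y' (Multiset.mem_cons_of_mem hy')))

lemma shape_rearrange (A B : G) (R S' : Multiset G) :
    (A ::ₘ B ::ₘ R) + S' = B ::ₘ ((A ::ₘ R) + S') := by
  have h1 : (A ::ₘ B ::ₘ R) + S' = A ::ₘ B ::ₘ (R + S') := by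
    rw [Multiset.cons_add, Multiset.cons_add]
  have h2 : B ::ₘ ((A ::ₘ R) + S') = B ::ₘ A ::ₘ (R + S') := by
    rw [Multiset.cons_add]
  rw [h1, h2, Multiset.cons_swap]

variable [Finite G]

lemma caseB {A B : G} (hA : A ∈ H) (hB : B ∈ H)
    (hspan : ∀ w ∈ H, ∃ i j : ℕ, w = A ^ i * B ^ j)
    (hp : p.Prime) (e : ↥H ≃* Multiplicative (ZMod p) × Multiplicative (ZMod p))
    (k : ℕ) {Sout : Multiset G}
    (ho1 : ∀ x ∈ Sout, x ∉ H)
    (ho2 : (Sout.map (piL H)).Nodup) (ho3 : (Sout.map (piR H)).Nodup)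
    (hP : ∀ x ∈ Sout, ∀ h ∈ H, ∃ y ∈ Sout, piL H (h * x) = piL H y)
    (hgen : Subgroup.closure {z : G | z ∈ (A ::ₘ B ::ₘ Multiset.replicate k A) + Sout} = ⊤)
    (hcard : Multiset.card ((A ::ₘ B ::ₘ Multiset.replicate k A) + Sout) ≤ H.index) :
    ∃ S₃, NielsenEquiv ((A ::ₘ B ::ₘ Multiset.replicate k A) + Sout) S₃ ∧ PairInj H S₃ := by
  classical
  set base : Multiset G := Multiset.replicate (k + 1) A + Sout with hbasedef
  have hre : (A ::ₘ B ::ₘ Multiset.replicate k A) + Sout = B ::ₘ base := by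
    rw [shape_rearrange]
    show B ::ₘ ((A ::ₘ Multiset.replicate k A) + Sout)
        = B ::ₘ (Multiset.replicate (k + 1) A + Sout)
    rw [Multiset.replicate_succ]
  set K := Subgroup.closure {z : G | z ∈ base} with hKdef
  set KH : Set G := {g | ∃ kk ∈ K, ∃ hh ∈ H, g = kk * hh} with hKHdef
  have h1KH : (1 : G) ∈ KH := ⟨1, one_mem K, 1, one_mem H, by simp⟩
  have hbase_val_K : ∀ w ∈ base, w ∈ K := fun w hw => mem_closure_of_mem hw
  have hAbase : A ∈ base := by
    rw [hbasedef, Multiset.mem_add]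
    exact Or.inl (by rw [Multiset.mem_replicate]; exact ⟨by omega, rfl⟩)
  have hSoutbase : ∀ y ∈ Sout, y ∈ base := by
    intro y hy
    rw [hbasedef, Multiset.mem_add]
    exact Or.inr hy
  have hbp : PairInj H base := by
    rw [hbasedef]
    exact base_pairinj hA ho1 ho2 ho3
  have hzR_aux : ∀ z : G, (∀ w ∈ base, piL H z ≠ piL H w) → (z ∈ H → False) →
      ∀ w ∈ base, piR H z ≠ piR H w := by
    intro z hzL hzH w hw heq
    rw [piR_eq] at heq
    rw [hbasedef, Multiset.mem_add] at hw
    rcases hw with hw | hw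
    · have hwA : w = A := Multiset.eq_of_mem_replicate hw
      apply hzH
      have he : z = (z * w⁻¹) * w := by group
      rw [he]
      exact mul_mem heq (by rw [hwA]; exact hA)
    · obtain ⟨y, hy, hclass⟩ := hP w hw (z * w⁻¹) heq
      have hzy : piL H z = piL H y := by
        rw [← hclass]
        congr 1
        group
      exact hzL y (hSoutbase y hy) hzy
  by_cases hv : ∃ v ∈ K, B * v ∉ KH
  · obtain ⟨v, hvK, hzKH⟩ := hv
    have hmove : NielsenEquiv (B ::ₘ base) ((B * v) ::ₘ base) := equiv_smul_right hvK B
    have hzL : ∀ w ∈ base, piL H (B * v) ≠ piL H w := by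
      intro w hw heq
      rw [piL_eq] at heq
      apply hzKH
      exact ⟨w, hbase_val_K w hw, ((B * v)⁻¹ * w)⁻¹, inv_mem heq, by group⟩
    have hzH : B * v ∈ H → False := fun hmem => hzKH ⟨1, one_mem K, B * v, hmem, by group⟩
    refine ⟨(B * v) ::ₘ base, by rw [hre]; exact hmove, ?_⟩
    exact pairinj_cons hbp hzL (hzR_aux _ hzL hzH)
  · push_neg at hv
    have hKH_fin : KH.Finite := Set.toFinite _
    set J : Subgroup G :=
      { carrier := {g | ∀ w ∈ KH, g * w ∈ KH}
        one_mem' := by intro w hw; rwa [one_mul]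
        mul_mem' := by
          intro a b ha hb w hw
          rw [mul_assoc]
          exact ha _ (hb _ hw)
        inv_mem' := by
          intro a ha w hw
          have himg : (fun u => a * u) '' KH = KH := by
            apply Set.eq_of_subset_of_ncard_le
            · rintro _ ⟨u, hu, rfl⟩
              exact ha u hu
            · rw [Set.ncard_image_of_injective _ (mul_right_injective a)]
            · exact hKH_fin
          have hmem : w ∈ (fun u => a * u) '' KH := by rw [himg]; exact hw
          obtain ⟨u, hu, he⟩ := hmem
          have he2 : a⁻¹ * w = u := by rw [← he]; group
          rwa [he2] } with hJdef
    have hJtop : ∀ g : G, g ∈ J := by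
      have hle : Subgroup.closure {z : G | z ∈ (A ::ₘ B ::ₘ Multiset.replicate k A) + Sout} ≤ J := by
        rw [Subgroup.closure_le]
        intro g hg
        have hg' : g ∈ B ::ₘ base := by rw [← hre]; exact hg
        rcases Multiset.mem_cons.mp hg' with rfl | hgbase
        · intro w hw
          obtain ⟨kk, hkk, hh, hhh, rfl⟩ := hw
          obtain ⟨k', hk', h', hh', he⟩ := hv kk hkk
          refine ⟨k', hk', h' * hh, mul_mem hh' hhh, ?_⟩
          rw [← mul_assoc, he, mul_assoc]
        · intro w hw
          obtain ⟨kk, hkk, hh, hhh, rfl⟩ := hw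
          exact ⟨g * kk, mul_mem (hbase_val_K g hgbase) hkk, hh, hhh, by rw [mul_assoc]⟩
      intro g
      apply hle
      rw [hgen]
      trivial
    have hGKH : ∀ g : G, g ∈ KH := by
      intro g
      have := hJtop g 1 h1KH
      rwa [mul_one] at this
    -- A ≠ B
    have hABne : A ≠ B := by
      intro hAB
      have hle : H ≤ Subgroup.zpowers A := by
        intro w hw
        obtain ⟨i, j, hij⟩ := hspan w hw
        refine Subgroup.mem_zpowers_iff.mpr ⟨((i : ℤ) + (j : ℤ)), ?_⟩
        rw [zpow_add, zpow_natCast, zpow_natCast, hij, hAB]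
      have hc1 : Nat.card ↥H ≤ Nat.card (Subgroup.zpowers A) := Subgroup.card_le_of_le hle
      rw [Nat.card_zpowers, H_card hp e] at hc1
      have hc2 : orderOf A ≤ p :=
        Nat.le_of_dvd hp.pos (orderOf_dvd_of_pow_eq_one (H_pow_p hp e A hA))
      have hp2 := hp.two_le
      nlinarith
    set UL : Finset (G ⧸ H) := ((B ::ₘ base).toFinset).image (piL H) with hULdef
    have hmemUL : ∀ w ∈ (B ::ₘ base), piL H w ∈ UL :=
      fun w hw => Finset.mem_image_of_mem _ (Multiset.mem_toFinset.mpr hw)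
    have hULcard : UL.card < H.index := by
      have hBA : piL H B = piL H A := by
        rw [piL_eq]
        exact mul_mem (inv_mem hB) hA
      have hAmem : A ∈ ((B ::ₘ base).toFinset).erase B := by
        rw [Finset.mem_erase]
        exact ⟨hABne, Multiset.mem_toFinset.mpr (Multiset.mem_cons_of_mem hAbase)⟩
      have hULeq : UL = (((B ::ₘ base).toFinset).erase B).image (piL H) := by
        apply le_antisymm
        · intro c hc
          rw [hULdef, Finset.mem_image] at hc
          obtain ⟨w, hw, rfl⟩ := hc
          by_cases hwB : w = B
          · subst hwB
            rw [Finset.mem_image]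
            exact ⟨A, hAmem, hBA.symm⟩
          · exact Finset.mem_image_of_mem _ (Finset.mem_erase.mpr ⟨hwB, hw⟩)
        · exact Finset.image_subset_image (Finset.erase_subset _ _)
      have h1 : UL.card ≤ ((B ::ₘ base).toFinset).card - 1 := by
        rw [hULeq]
        calc ((((B ::ₘ base).toFinset).erase B).image (piL H)).card
            ≤ (((B ::ₘ base).toFinset).erase B).card := Finset.card_image_le
        _ = ((B ::ₘ base).toFinset).card - 1 :=
            Finset.card_erase_of_mem (Multiset.mem_toFinset.mpr (Multiset.mem_cons_self _ _))
      have h2 : ((B ::ₘ base).toFinset).card ≤ Multiset.card (B ::ₘ base) :=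
        Multiset.toFinset_card_le _
      have h3 : Multiset.card (B ::ₘ base) ≤ H.index := by rw [← hre]; exact hcard
      have h4 : 2 ≤ ((B ::ₘ base).toFinset).card := by
        have : ({B, A} : Finset G) ⊆ (B ::ₘ base).toFinset := by
          intro w hw
          rcases Finset.mem_insert.mp hw with rfl | hw
          · exact Multiset.mem_toFinset.mpr (Multiset.mem_cons_self _ _)
          · rw [Finset.mem_singleton] at hw
            subst hw
            exact Multiset.mem_toFinset.mpr (Multiset.mem_cons_of_mem hAbase)
        have hcard2 : ({B, A} : Finset G).card = 2 := by
          rw [Finset.card_insert_of_notMem (by simp [Ne.symm hABne]), Finset.card_singleton]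
        calc 2 = ({B, A} : Finset G).card := hcard2.symm
        _ ≤ _ := Finset.card_le_card this
      omega
    have hfree : ∃ c : G ⧸ H, c ∉ UL := by
      by_contra hcon
      push_neg at hcon
      have : UL = Finset.univ := Finset.eq_univ_iff_forall.mpr hcon
      rw [this] at hULcard
      have : H.index = Nat.card (G ⧸ H) := rfl
      rw [this, Nat.card_eq_fintype_card, ← Finset.card_univ] at hULcard
      omega
    obtain ⟨c, hcfree⟩ := hfree
    obtain ⟨k₀, hk₀K, h₀, hh₀H, hg₀⟩ := hGKH c.out
    set z := k₀ * B with hzdef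
    have hmove : NielsenEquiv (B ::ₘ base) (z ::ₘ base) := equiv_smul_left hk₀K B
    have hzLc : piL H z = c := by
      rw [hzdef, piL_mul_right hB]
      have hk₀ : k₀ = c.out * h₀⁻¹ := by rw [hg₀]; group
      rw [hk₀, piL_mul_right (inv_mem hh₀H)]
      exact Quotient.out_eq c
    have hzL : ∀ w ∈ base, piL H z ≠ piL H w := by
      intro w hw heq
      apply hcfree
      rw [← hzLc, heq]
      exact hmemUL w (Multiset.mem_cons_of_mem hw)
    have hzH : z ∈ H → False := by
      intro hzmem
      apply hcfree
      rw [← hzLc]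
      have : piL H z = piL H A := by rw [piL_eq]; exact mul_mem (inv_mem hzmem) hA
      rw [this]
      exact hmemUL A (Multiset.mem_cons_of_mem hAbase)
    refine ⟨z ::ₘ base, by rw [hre]; exact hmove, ?_⟩
    exact pairinj_cons hbp hzL (hzR_aux _ hzL hzH)

end NielsenAux

end Crunch
section CrunchA

open scoped Classical

attribute [local instance] Fintype.ofFinite

namespace NielsenAux

variable {G : Type*} [Group G] {H : Subgroup G} {p : ℕ}

lemma conj_pow' (a b : G) (n : ℕ) : (a⁻¹ * b * a) ^ n = a⁻¹ * b ^ n * a := by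
  induction n with
  | zero => group
  | succ n ih => rw [pow_succ, ih, pow_succ]; group

lemma conj_span {x A B : G} (hspan : ∀ w ∈ H, ∃ i j : ℕ, w = A ^ i * B ^ j)
    (ha : x⁻¹ * A * x ∈ H) (hb : x⁻¹ * B * x ∈ H) : ∀ h ∈ H, x⁻¹ * h * x ∈ H := by
  intro h hh
  obtain ⟨i, j, rfl⟩ := hspan h hh
  have he : x⁻¹ * (A ^ i * B ^ j) * x = (x⁻¹ * A * x) ^ i * (x⁻¹ * B * x) ^ j := by
    rw [conj_pow', conj_pow']; group
  rw [he]
  exact mul_mem (pow_mem ha i) (pow_mem hb j)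

variable [Finite G]

lemma Lfin_small {x : G} (hconj : ∀ h ∈ H, x⁻¹ * h * x ∈ H) :
    Lfin H x ⊆ {piL H x} := by
  intro c hc
  rw [mem_Lfin] at hc
  obtain ⟨h, hh, rfl⟩ := hc
  rw [Finset.mem_singleton, piL_eq]
  have h2 := hconj h⁻¹ (inv_mem hh)
  have he : (h * x)⁻¹ * x = x⁻¹ * h⁻¹ * x := by group
  rwa [he]

lemma Rfin_small {x : G} (hconj : ∀ h ∈ H, x * h * x⁻¹ ∈ H) :
    Rfin H x ⊆ {piR H x} := by
  intro c hc
  rw [mem_Rfin] at hc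
  obtain ⟨h, hh, rfl⟩ := hc
  rw [Finset.mem_singleton, piR_eq]
  have h2 := hconj h hh
  have he : x * h * x⁻¹ = x * h * x⁻¹ := rfl
  have he2 : (x * h) * x⁻¹ = x * h * x⁻¹ := by group
  rwa [he2]

lemma Rfin_eq_of_dRel {x y : G} (h : dRel H x y) : Rfin H x = Rfin H y := by
  rw [Rfin_eq_Lfin_inv, Rfin_eq_Lfin_inv]
  exact Lfin_eq_of_dRel (dRel_inv h)

lemma Lfin_ne_H {x : G} (hx : x ∉ H) {c : G ⧸ H} (hc : c ∈ Lfin H x) {a : G} (ha : a ∈ H) :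
    c ≠ piL H a := by
  rw [mem_Lfin] at hc
  obtain ⟨h, hh, rfl⟩ := hc
  intro heq
  rw [piL_eq] at heq
  apply hx
  have he : x = h⁻¹ * a * ((h * x)⁻¹ * a)⁻¹ := by group
  rw [he]
  exact mul_mem (mul_mem (inv_mem hh) ha) (inv_mem heq)

lemma Rfin_ne_H {x : G} (hx : x ∉ H) {c : G ⧸ H} (hc : c ∈ Rfin H x) {a : G} (ha : a ∈ H) :
    c ≠ piR H a := by
  rw [mem_Rfin] at hc
  obtain ⟨h, hh, rfl⟩ := hc
  intro heq
  rw [piR_eq] at heq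
  apply hx
  have he : x = ((x * h) * a⁻¹) * a * h⁻¹ := by group
  rw [he]
  exact mul_mem (mul_mem heq ha) (inv_mem hh)

lemma caseA_core (hp : p.Prime) (e : ↥H ≃* Multiplicative (ZMod p) × Multiplicative (ZMod p))
    {A B x : G} (hA : A ∈ H) (hB : B ∈ H)
    (hspan : ∀ w ∈ H, ∃ i j : ℕ, w = A ^ i * B ^ j)
    (k : ℕ) {Sout : Multiset G}
    (ho1 : ∀ y ∈ Sout, y ∉ H)
    (ho2 : (Sout.map (piL H)).Nodup) (ho3 : (Sout.map (piR H)).Nodup)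
    (hxS : x ∈ Sout)
    (hAx : x⁻¹ * A⁻¹ * x ∉ H)
    (hcount : (Sout.toFinset.filter (fun y => y ≠ x ∧ piL H y ∈ Lfin H x)).card + 2
        ≤ (Lfin H x).card) :
    ∃ S₃, NielsenEquiv ((A ::ₘ B ::ₘ Multiset.replicate k A) + Sout) S₃ ∧ PairInj H S₃ := by
  classical
  have hxH : x ∉ H := ho1 x hxS
  set othersD := Sout.toFinset.filter (fun y => y ≠ x ∧ piL H y ∈ Lfin H x) with hoD
  set r := othersD.card with hrdef
  have hinjL : ∀ a ∈ Sout, ∀ b ∈ Sout, piL H a = piL H b → a = b :=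
    fun a ha b hb h => Multiset.inj_on_of_nodup_map ho2 a ha b hb h
  have hinjR : ∀ a ∈ Sout, ∀ b ∈ Sout, piR H a = piR H b → a = b :=
    fun a ha b hb h => Multiset.inj_on_of_nodup_map ho3 a ha b hb h
  -- choose m with x * (B * A ^ m) * x⁻¹ ∉ H
  have hm : ∃ m : ℕ, x * (B * A ^ m) * x⁻¹ ∉ H := by
    by_cases hb0 : x * B * x⁻¹ ∈ H
    · refine ⟨1, ?_⟩
      intro hcon
      have hxa : x * A * x⁻¹ ∈ H := by
        have h2 := mul_mem (inv_mem hb0) hcon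
        have he : (x * B * x⁻¹)⁻¹ * (x * (B * A ^ 1) * x⁻¹) = x * A * x⁻¹ := by
          rw [pow_one]; group
        rwa [he] at h2
      have hall : ∀ h ∈ H, x * h * x⁻¹ ∈ H := by
        have hconj := conj_span (x := x⁻¹) hspan (by rwa [inv_inv]) (by rwa [inv_inv])
        intro h hh
        have h2 := hconj h hh
        rwa [inv_inv] at h2
      have hsub := Rfin_small hall
      have hcard1 : (Rfin H x).card ≤ 1 := by
        calc (Rfin H x).card ≤ ({piR H x} : Finset _).card := Finset.card_le_card hsub
        _ = 1 := rfl
      rw [card_Rfin_eq] at hcard1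
      omega
    · exact ⟨0, by rwa [pow_zero, mul_one]⟩
  obtain ⟨m, hmne⟩ := hm
  set L₂ := piL H (A * x) with hL₂def
  set R₂ := piR H (x * (B * A ^ m)) with hR₂def
  have hL₂mem : L₂ ∈ Lfin H x := mem_Lfin.mpr ⟨A, hA, rfl⟩
  have hR₂mem : R₂ ∈ Rfin H x := mem_Rfin.mpr ⟨B * A ^ m, mul_mem hB (pow_mem hA m), rfl⟩
  have hL₂ne : L₂ ≠ piL H x := by
    rw [hL₂def]
    intro hcon
    rw [piL_eq] at hcon
    apply hAx
    have he : (A * x)⁻¹ * x = x⁻¹ * A⁻¹ * x := by group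
    rwa [he] at hcon
  have hR₂ne : R₂ ≠ piR H x := by
    rw [hR₂def]
    intro hcon
    rw [piR_eq] at hcon
    apply hmne
    have he : (x * (B * A ^ m)) * x⁻¹ = x * (B * A ^ m) * x⁻¹ := by group
    rwa [he] at hcon
  set availL := ((Lfin H x).erase (piL H x)).erase L₂ with havailL
  set availR := ((Rfin H x).erase (piR H x)).erase R₂ with havailR
  have havailL_spec : ∀ c ∈ availL, c ≠ L₂ ∧ c ≠ piL H x ∧ c ∈ Lfin H x := by
    intro c hc
    rw [havailL] at hc
    obtain ⟨h1, hc⟩ := Finset.mem_erase.mp hc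
    obtain ⟨h2, hc⟩ := Finset.mem_erase.mp hc
    exact ⟨h1, h2, hc⟩
  have havailR_spec : ∀ c ∈ availR, c ≠ R₂ ∧ c ≠ piR H x ∧ c ∈ Rfin H x := by
    intro c hc
    rw [havailR] at hc
    obtain ⟨h1, hc⟩ := Finset.mem_erase.mp hc
    obtain ⟨h2, hc⟩ := Finset.mem_erase.mp hc
    exact ⟨h1, h2, hc⟩
  have havailL_card : r ≤ availL.card := by
    have h1 : ((Lfin H x).erase (piL H x)).card = (Lfin H x).card - 1 :=
      Finset.card_erase_of_mem piL_mem_Lfin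
    have h2 : availL.card = ((Lfin H x).erase (piL H x)).card - 1 := by
      rw [havailL]
      exact Finset.card_erase_of_mem (Finset.mem_erase.mpr ⟨hL₂ne, hL₂mem⟩)
    omega
  have havailR_card : r ≤ availR.card := by
    have h1 : ((Rfin H x).erase (piR H x)).card = (Rfin H x).card - 1 :=
      Finset.card_erase_of_mem piR_mem_Rfin
    have h2 : availR.card = ((Rfin H x).erase (piR H x)).card - 1 := by
      rw [havailR]
      exact Finset.card_erase_of_mem (Finset.mem_erase.mpr ⟨hR₂ne, hR₂mem⟩)
    have h3 : (Rfin H x).card = (Lfin H x).card := card_Rfin_eq x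
    omega
  obtain ⟨tL, htLsub, htLcard⟩ := Finset.exists_subset_card_eq havailL_card
  obtain ⟨tR, htRsub, htRcard⟩ := Finset.exists_subset_card_eq havailR_card
  obtain ⟨eL⟩ : Nonempty ({y // y ∈ othersD} ≃ {c // c ∈ tL}) :=
    ⟨Finset.equivOfCardEq (by rw [htLcard])⟩
  obtain ⟨eR⟩ : Nonempty ({y // y ∈ othersD} ≃ {c // c ∈ tR}) :=
    ⟨Finset.equivOfCardEq (by rw [htRcard])⟩
  have hothers : ∀ y ∈ othersD, y ∈ Sout ∧ y ≠ x ∧ piL H y ∈ Lfin H x := by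
    intro y hy
    rw [hoD, Finset.mem_filter] at hy
    exact ⟨Multiset.mem_toFinset.mp hy.1, hy.2.1, hy.2.2⟩
  have hdx : ∀ y ∈ othersD, dRel H x y := fun y hy => piL_mem_Lfin_iff.mp (hothers y hy).2.2
  have htL_avail : ∀ s : {y // y ∈ othersD}, ((eL s : {c // c ∈ tL}) : G ⧸ H) ∈ availL :=
    fun s => htLsub (eL s).2
  have htR_avail : ∀ s : {y // y ∈ othersD}, ((eR s : {c // c ∈ tR}) : G ⧸ H) ∈ availR :=
    fun s => htRsub (eR s).2
  have htarget : ∀ (y : G) (hy : y ∈ othersD), ∃ z : G,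
      piL H z = ((eL ⟨y, hy⟩ : {c // c ∈ tL}) : G ⧸ H) ∧
      piR H z = ((eR ⟨y, hy⟩ : {c // c ∈ tR}) : G ⧸ H) ∧
      ∃ u ∈ H, ∃ v ∈ H, z = u * y * v := by
    intro y hy
    have hdxy := hdx y hy
    have hLy : ((eL ⟨y, hy⟩ : {c // c ∈ tL}) : G ⧸ H) ∈ Lfin H y := by
      rw [← Lfin_eq_of_dRel hdxy]
      exact (havailL_spec _ (htL_avail ⟨y, hy⟩)).2.2
    have hRy : ((eR ⟨y, hy⟩ : {c // c ∈ tR}) : G ⧸ H) ∈ Rfin H y := by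
      rw [← Rfin_eq_of_dRel hdxy]
      exact (havailR_spec _ (htR_avail ⟨y, hy⟩)).2.2
    rw [mem_Lfin] at hLy
    obtain ⟨h₁, hh₁, hc1⟩ := hLy
    rw [mem_Rfin] at hRy
    obtain ⟨h₂, hh₂, hc2⟩ := hRy
    refine ⟨h₁ * y * h₂, ?_, ?_, h₁, hh₁, h₂, hh₂, rfl⟩
    · rw [hc1]
      rw [show h₁ * y * h₂ = (h₁ * y) * h₂ from by group, piL_mul_right hh₂]
    · rw [hc2]
      rw [show h₁ * y * h₂ = h₁ * (y * h₂) from by group, piR_mul_left hh₁]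
  set f : G → G := fun y => if hy : y ∈ othersD then (htarget y hy).choose else y with hfdef
  have hf_pos : ∀ (y : G) (hy : y ∈ othersD),
      piL H (f y) = ((eL ⟨y, hy⟩ : {c // c ∈ tL}) : G ⧸ H) ∧
      piR H (f y) = ((eR ⟨y, hy⟩ : {c // c ∈ tR}) : G ⧸ H) ∧
      ∃ u ∈ H, ∃ v ∈ H, f y = u * y * v := by
    intro y hy
    have : f y = (htarget y hy).choose := by rw [hfdef]; simp only [dif_pos hy]
    rw [this]
    exact (htarget y hy).choose_spec
  have hf_neg : ∀ y, y ∉ othersD → f y = y := by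
    intro y hy
    rw [hfdef]
    simp only [dif_neg hy]
  have hxo : x ∉ othersD := by
    intro hx
    exact ((Finset.mem_filter.mp hx).2.1) rfl
  have hfx : f x = x := hf_neg x hxo
  have hnoto : ∀ y ∈ Sout, y ∉ othersD → y = x ∨ piL H y ∉ Lfin H x := by
    intro y hy hyo
    by_cases hyx : y = x
    · exact Or.inl hyx
    · right
      intro hmem
      exact hyo (by rw [hoD, Finset.mem_filter]
                    exact ⟨Multiset.mem_toFinset.mpr hy, hyx, hmem⟩)
  set baseH := A ::ₘ B ::ₘ Multiset.replicate k A with hbHdef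
  have hAmem : A ∈ baseH := Multiset.mem_cons_self _ _
  have hBmem : B ∈ baseH := Multiset.mem_cons_of_mem (Multiset.mem_cons_self _ _)
  have hmove1 : NielsenEquiv (Sout + baseH) (Sout.map f + baseH) := by
    apply move_each
    intro y hy
    by_cases hyo : y ∈ othersD
    · obtain ⟨_, _, u, hu, v, hv, huv⟩ := hf_pos y hyo
      exact ⟨u, v, span_mem_closure hAmem hBmem hspan u hu,
        span_mem_closure hAmem hBmem hspan v hv, huv⟩
    · exact ⟨1, 1, one_mem _, one_mem _, by rw [hf_neg y hyo]; group⟩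
  set rest := (A ::ₘ Multiset.replicate k A) + Sout.map f with hrest
  have hre2 : Sout.map f + baseH = B ::ₘ rest := by
    rw [add_comm, hbHdef, shape_rearrange]
  set z₂ := (A * x) * B * (A ^ m) with hz₂def
  have hxrest : x ∈ rest := by
    rw [hrest, Multiset.mem_add]
    right
    rw [← hfx]
    exact Multiset.mem_map_of_mem f hxS
  have hArest : A ∈ rest := by
    rw [hrest, Multiset.mem_add]
    exact Or.inl (Multiset.mem_cons_self _ _)
  have hmove2 : NielsenEquiv (B ::ₘ rest) (z₂ ::ₘ rest) := by
    have hu : (A * x) ∈ Subgroup.closure {z : G | z ∈ rest} :=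
      mul_mem (mem_closure_of_mem hArest) (mem_closure_of_mem hxrest)
    have hv : (A ^ m) ∈ Subgroup.closure {z : G | z ∈ rest} :=
      pow_mem (mem_closure_of_mem hArest) m
    exact equiv_sandwich hu hv B
  have hz₂L : piL H z₂ = L₂ := by
    rw [hz₂def, hL₂def]
    rw [show (A * x) * B * (A ^ m) = (A * x) * (B * A ^ m) from by group,
      piL_mul_right (mul_mem hB (pow_mem hA m))]
  have hz₂R : piR H z₂ = R₂ := by
    rw [hz₂def, hR₂def]
    rw [show (A * x) * B * (A ^ m) = A * (x * (B * A ^ m)) from by group,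
      piR_mul_left hA]
  -- membership characterization of rest
  have hmem_rest : ∀ w ∈ rest, w = A ∨ ∃ y ∈ Sout, f y = w := by
    intro w hw
    rw [hrest, Multiset.mem_add] at hw
    rcases hw with hw | hw
    · left
      rcases Multiset.mem_cons.mp hw with h | h
      · exact h
      · exact Multiset.eq_of_mem_replicate h
    · right
      rw [Multiset.mem_map] at hw
      exact hw
  -- class facts for moved / unmoved elements
  have hcmpL : ∀ ya ∈ Sout, ∀ yb ∈ Sout, piL H (f ya) = piL H (f yb) → f ya = f yb := by
    intro ya hya yb hyb heq
    by_cases hao : ya ∈ othersD <;> by_cases hbo : yb ∈ othersD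
    · have e1 := (hf_pos ya hao).1
      have e2 := (hf_pos yb hbo).1
      rw [e1, e2] at heq
      have : eL ⟨ya, hao⟩ = eL ⟨yb, hbo⟩ := Subtype.ext heq
      have h2 : (⟨ya, hao⟩ : {y // y ∈ othersD}) = ⟨yb, hbo⟩ := eL.injective this
      have h3 : ya = yb := congrArg Subtype.val h2
      subst h3
      rfl
    · exfalso
      have e1 := (hf_pos ya hao).1
      rw [hf_neg yb hbo] at heq
      rw [e1] at heq
      have hspec := havailL_spec _ (htL_avail ⟨ya, hao⟩)
      rcases hnoto yb hyb hbo with rfl | hnot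
      · exact hspec.2.1 heq
      · exact hnot (heq ▸ hspec.2.2)
    · exfalso
      have e2 := (hf_pos yb hbo).1
      rw [hf_neg ya hao] at heq
      rw [e2] at heq
      have hspec := havailL_spec _ (htL_avail ⟨yb, hbo⟩)
      rcases hnoto ya hya hao with rfl | hnot
      · exact hspec.2.1 heq.symm
      · exact hnot (heq ▸ hspec.2.2)
    · rw [hf_neg ya hao, hf_neg yb hbo] at heq ⊢
      rw [hinjL ya hya yb hyb heq]
  have hcmpR : ∀ ya ∈ Sout, ∀ yb ∈ Sout, piR H (f ya) = piR H (f yb) → f ya = f yb := by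
    intro ya hya yb hyb heq
    by_cases hao : ya ∈ othersD <;> by_cases hbo : yb ∈ othersD
    · have e1 := (hf_pos ya hao).2.1
      have e2 := (hf_pos yb hbo).2.1
      rw [e1, e2] at heq
      have : eR ⟨ya, hao⟩ = eR ⟨yb, hbo⟩ := Subtype.ext heq
      have h2 : (⟨ya, hao⟩ : {y // y ∈ othersD}) = ⟨yb, hbo⟩ := eR.injective this
      have h3 : ya = yb := congrArg Subtype.val h2
      subst h3
      rfl
    · exfalso
      have e1 := (hf_pos ya hao).2.1
      rw [hf_neg yb hbo] at heq
      rw [e1] at heq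
      have hspec := havailR_spec _ (htR_avail ⟨ya, hao⟩)
      rcases hnoto yb hyb hbo with rfl | hnot
      · exact hspec.2.1 heq
      · apply hnot
        have hmemR : piR H yb ∈ Rfin H x := heq ▸ hspec.2.2
        exact piL_mem_Lfin_iff.mpr (piR_mem_Rfin_iff.mp hmemR)
    · exfalso
      have e2 := (hf_pos yb hbo).2.1
      rw [hf_neg ya hao] at heq
      rw [e2] at heq
      have hspec := havailR_spec _ (htR_avail ⟨yb, hbo⟩)
      rcases hnoto ya hya hao with rfl | hnot
      · exact hspec.2.1 heq.symm
      · apply hnot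
        have hmemR : piR H ya ∈ Rfin H x := heq ▸ hspec.2.2
        exact piL_mem_Lfin_iff.mpr (piR_mem_Rfin_iff.mp hmemR)
    · rw [hf_neg ya hao, hf_neg yb hbo] at heq ⊢
      rw [hinjR ya hya yb hyb heq]
  -- moved/unmoved elements are not in H (for comparison with A)
  have hfL_ne_A : ∀ y ∈ Sout, piL H (f y) ≠ piL H A := by
    intro y hy
    by_cases hyo : y ∈ othersD
    · rw [(hf_pos y hyo).1]
      exact Lfin_ne_H hxH (havailL_spec _ (htL_avail ⟨y, hyo⟩)).2.2 hA
    · rw [hf_neg y hyo]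
      intro heq
      exact ho1 y hy (mem_H_of_piL hA heq.symm)
  have hfR_ne_A : ∀ y ∈ Sout, piR H (f y) ≠ piR H A := by
    intro y hy
    by_cases hyo : y ∈ othersD
    · rw [(hf_pos y hyo).2.1]
      exact Rfin_ne_H hxH (havailR_spec _ (htR_avail ⟨y, hyo⟩)).2.2 hA
    · rw [hf_neg y hyo]
      intro heq
      exact ho1 y hy (mem_H_of_piR hA heq.symm)
  have hrest_pair : PairInj H rest := by
    intro a ha b hb
    rcases hmem_rest a ha with rfl | ⟨ya, hya, hfa⟩ <;>
      rcases hmem_rest b hb with hbA | ⟨yb, hyb, hfb⟩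
    · rw [hbA]
      exact ⟨fun _ => rfl, fun _ => rfl⟩
    · rw [← hfb]
      constructor
      · intro h; exact absurd h.symm (hfL_ne_A yb hyb)
      · intro h; exact absurd h.symm (hfR_ne_A yb hyb)
    · rw [hbA, ← hfa]
      constructor
      · intro h; exact absurd h (hfL_ne_A ya hya)
      · intro h; exact absurd h (hfR_ne_A ya hya)
    · rw [← hfa, ← hfb]
      exact ⟨hcmpL ya hya yb hyb, hcmpR ya hya yb hyb⟩
  have hzL : ∀ w ∈ rest, piL H z₂ ≠ piL H w := by
    intro w hw
    rw [hz₂L]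
    rcases hmem_rest w hw with rfl | ⟨y, hy, hfy⟩
    · exact Lfin_ne_H hxH hL₂mem hA
    · rw [← hfy]
      by_cases hyo : y ∈ othersD
      · rw [(hf_pos y hyo).1]
        intro heq
        exact (havailL_spec _ (htL_avail ⟨y, hyo⟩)).1 heq.symm
      · rw [hf_neg y hyo]
        rcases hnoto y hy hyo with rfl | hnot
        · exact hL₂ne
        · intro heq
          exact hnot (heq ▸ hL₂mem)
  have hzR : ∀ w ∈ rest, piR H z₂ ≠ piR H w := by
    intro w hw
    rw [hz₂R]
    rcases hmem_rest w hw with rfl | ⟨y, hy, hfy⟩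
    · exact Rfin_ne_H hxH hR₂mem hA
    · rw [← hfy]
      by_cases hyo : y ∈ othersD
      · rw [(hf_pos y hyo).2.1]
        intro heq
        exact (havailR_spec _ (htR_avail ⟨y, hyo⟩)).1 heq.symm
      · rw [hf_neg y hyo]
        rcases hnoto y hy hyo with rfl | hnot
        · exact hR₂ne
        · intro heq
          apply hnot
          have hmemR : piR H y ∈ Rfin H x := heq ▸ hR₂mem
          exact piL_mem_Lfin_iff.mpr (piR_mem_Rfin_iff.mp hmemR)
  refine ⟨z₂ ::ₘ rest, ?_, pairinj_cons hrest_pair hzL hzR⟩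
  have h0 : (A ::ₘ B ::ₘ Multiset.replicate k A) + Sout = Sout + baseH := by
    rw [hbHdef, add_comm]
  rw [h0]
  refine equiv_trans hmove1 ?_
  rw [hre2]
  exact hmove2

end NielsenAux

end CrunchA
section CrunchA2

open scoped Classical

attribute [local instance] Fintype.ofFinite

namespace NielsenAux

variable {G : Type*} [Group G] {H : Subgroup G} {p : ℕ}

lemma add_cons_right (R S : Multiset G) (b : G) : R + (b ::ₘ S) = b ::ₘ (R + S) := by
  rw [add_comm, Multiset.cons_add, add_comm S R]

variable [Finite G]

lemma caseA (hp : p.Prime) (e : ↥H ≃* Multiplicative (ZMod p) × Multiplicative (ZMod p))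
    {A B : G} (hA : A ∈ H) (hB : B ∈ H)
    (hspan : ∀ w ∈ H, ∃ i j : ℕ, w = A ^ i * B ^ j)
    (k : ℕ) {Sout : Multiset G}
    (ho1 : ∀ y ∈ Sout, y ∉ H)
    (ho2 : (Sout.map (piL H)).Nodup) (ho3 : (Sout.map (piR H)).Nodup)
    (hnP : ∃ x ∈ Sout, ∃ h₀ ∈ H, ∀ y ∈ Sout, piL H (h₀ * x) ≠ piL H y) :
    ∃ S₃, NielsenEquiv ((A ::ₘ B ::ₘ Multiset.replicate k A) + Sout) S₃ ∧ PairInj H S₃ := by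
  classical
  obtain ⟨x, hxS, h₀, hh₀, hfree⟩ := hnP
  have hxH : x ∉ H := ho1 x hxS
  have hinjL : ∀ a ∈ Sout, ∀ b ∈ Sout, piL H a = piL H b → a = b :=
    fun a ha b hb h => Multiset.inj_on_of_nodup_map ho2 a ha b hb h
  set othersD := Sout.toFinset.filter (fun y => y ≠ x ∧ piL H y ∈ Lfin H x) with hoD
  have hcount : othersD.card + 2 ≤ (Lfin H x).card := by
    set W : Finset (G ⧸ H) :=
      insert (piL H (h₀ * x)) (insert (piL H x) (othersD.image (piL H))) with hW
    have hWsub : W ⊆ Lfin H x := by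
      intro c hc
      rw [hW] at hc
      rcases Finset.mem_insert.mp hc with rfl | hc
      · exact mem_Lfin.mpr ⟨h₀, hh₀, rfl⟩
      rcases Finset.mem_insert.mp hc with rfl | hc
      · exact piL_mem_Lfin
      · rw [Finset.mem_image] at hc
        obtain ⟨y, hy, rfl⟩ := hc
        exact (Finset.mem_filter.mp hy).2.2
    have himcard : (othersD.image (piL H)).card = othersD.card := by
      apply Finset.card_image_of_injOn
      intro a ha b hb hab
      have ha' : a ∈ Sout := Multiset.mem_toFinset.mp (Finset.mem_filter.mp ha).1
      have hb' : b ∈ Sout := Multiset.mem_toFinset.mp (Finset.mem_filter.mp hb).1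
      exact hinjL a ha' b hb' hab
    have hnx : piL H x ∉ othersD.image (piL H) := by
      rw [Finset.mem_image]
      rintro ⟨y, hy, hyx⟩
      have hy' : y ∈ Sout := Multiset.mem_toFinset.mp (Finset.mem_filter.mp hy).1
      exact (Finset.mem_filter.mp hy).2.1 (hinjL y hy' x hxS hyx)
    have hnf : piL H (h₀ * x) ∉ insert (piL H x) (othersD.image (piL H)) := by
      rw [Finset.mem_insert]
      rintro (h | h)
      · exact hfree x hxS h
      · rw [Finset.mem_image] at h
        obtain ⟨y, hy, hyx⟩ := h
        have hy' : y ∈ Sout := Multiset.mem_toFinset.mp (Finset.mem_filter.mp hy).1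
        exact hfree y hy' hyx.symm
    have hWcard : W.card = othersD.card + 2 := by
      rw [hW, Finset.card_insert_of_notMem hnf, Finset.card_insert_of_notMem hnx, himcard]
    calc othersD.card + 2 = W.card := hWcard.symm
    _ ≤ (Lfin H x).card := Finset.card_le_card hWsub
  by_cases hAx : x⁻¹ * A⁻¹ * x ∈ H
  · -- change basis : use A * B in place of A
    have hABx : x⁻¹ * (A * B)⁻¹ * x ∉ H := by
      intro hcon
      have hxa : x⁻¹ * A * x ∈ H := by
        have := inv_mem hAx
        have he : (x⁻¹ * A⁻¹ * x)⁻¹ = x⁻¹ * A * x := by group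
        rwa [he] at this
      have hxb : x⁻¹ * B * x ∈ H := by
        have h2 := inv_mem hcon
        have he2 : (x⁻¹ * (A * B)⁻¹ * x)⁻¹ = x⁻¹ * (A * B) * x := by group
        rw [he2] at h2
        have h3 := mul_mem (inv_mem hxa) h2
        have he3 : (x⁻¹ * A * x)⁻¹ * (x⁻¹ * (A * B) * x) = x⁻¹ * B * x := by group
        rwa [he3] at h3
      have hall : ∀ h ∈ H, x⁻¹ * h * x ∈ H := conj_span hspan hxa hxb
      have hsub := Lfin_small hall
      have hcard1 : (Lfin H x).card ≤ 1 := by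
        calc (Lfin H x).card ≤ ({piL H x} : Finset _).card := Finset.card_le_card hsub
        _ = 1 := rfl
      omega
    have hswap : NielsenEquiv ((A ::ₘ B ::ₘ Multiset.replicate k A) + Sout)
        (((A * B) ::ₘ B ::ₘ Multiset.replicate k (A * B)) + Sout) := by
      have e1 : (A ::ₘ B ::ₘ Multiset.replicate k A) + Sout
          = (A ::ₘ Multiset.replicate k A) + (B ::ₘ Sout) := by
        rw [Multiset.cons_add, Multiset.cons_add, Multiset.cons_add, add_cons_right]
      have e2 : ((A ::ₘ Multiset.replicate k A).map (fun z => z * B)) + (B ::ₘ Sout)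
          = ((A * B) ::ₘ B ::ₘ Multiset.replicate k (A * B)) + Sout := by
        rw [Multiset.map_cons, Multiset.map_replicate]
        rw [Multiset.cons_add, add_cons_right, Multiset.cons_add, Multiset.cons_add]
      rw [e1, ← e2]
      apply move_each
      intro y hy
      refine ⟨1, B, one_mem _, mem_closure_of_mem (Multiset.mem_cons_self _ _), by group⟩
    obtain ⟨S₃, hS₃, hpi⟩ := caseA_core hp e (mul_mem hA hB) hB (span_shift hp e hA hB hspan)
      k ho1 ho2 ho3 hxS hABx hcount
    exact ⟨S₃, equiv_trans hswap hS₃, hpi⟩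
  · exact caseA_core hp e hA hB hspan k ho1 ho2 ho3 hxS hAx hcount

end NielsenAux

end CrunchA2
open NielsenAux in
/-- for a prime `p`, a finite group `G` and a subgroup `H`
isomorphic to `C_p × C_p`, every generating multiset `S` with `|S| ≤ [G:H]` is
Nielsen equivalent to a multiset contained in a left-right transversal of `H`. -/
theorem stmt12 {G : Type*} [Group G] [Finite G] (p : ℕ) (hp : p.Prime)
    (H : Subgroup G)
    (hiso : Nonempty (↥H ≃* (Multiplicative (ZMod p) × Multiplicative (ZMod p))))
    (S : Multiset G) (hgen : Subgroup.closure {x : G | x ∈ S} = ⊤)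
    (hcard : S.card ≤ H.index) :
    ∃ S' : Multiset G, NielsenEquiv S S' ∧
      ∃ T : Set G, IsLeftTransversal H T ∧ IsRightTransversal H T ∧ ∀ x ∈ S', x ∈ T := by
  classical
  obtain ⟨e⟩ := hiso
  obtain ⟨S₁, heq1, hLd, hRd⟩ :=
    phase0 H (Multiset.card (S.filter (fun x => x ∉ H))) S le_rfl
  set Sout := S₁.filter (fun x => x ∉ H) with hSoutdef
  set SH := S₁.filter (fun x => x ∈ H) with hSHdef
  have hsplit : S₁ = SH + Sout := (Multiset.filter_add_not (fun x => x ∈ H) S₁).symm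
  have hSH_mem : ∀ x ∈ SH, x ∈ H := fun x hx => (Multiset.mem_filter.mp hx).2
  have ho1 : ∀ x ∈ Sout, x ∉ H := fun x hx => (Multiset.mem_filter.mp hx).2
  -- a generic finishing move
  have finish : ∀ S' : Multiset G, NielsenEquiv S S' → PairInj H S' →
      ∃ S' : Multiset G, NielsenEquiv S S' ∧
      ∃ T : Set G, IsLeftTransversal H T ∧ IsRightTransversal H T ∧ ∀ x ∈ S', x ∈ T := by
    intro S' hequiv hpair
    have hLinj : Set.InjOn (piL H) ↑S'.toFinset := by
      intro a ha b hb h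
      exact (hpair a (Multiset.mem_toFinset.mp ha) b (Multiset.mem_toFinset.mp hb)).1 h
    have hRinj : Set.InjOn (piR H) ↑S'.toFinset := by
      intro a ha b hb h
      exact (hpair a (Multiset.mem_toFinset.mp ha) b (Multiset.mem_toFinset.mp hb)).2 h
    obtain ⟨T, hT1, hT2, hT3⟩ := extend_transversal H S'.toFinset hLinj hRinj
    exact ⟨S', hequiv, T, hT1, hT2, fun x hx => hT3 x (Multiset.mem_toFinset.mpr hx)⟩
  rcases gaussian hp e SH hSH_mem with ⟨t₀, ht₀, k, hg⟩ | ⟨A, B, hA, hB, hspan, k, hg⟩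
  · have heq2 : NielsenEquiv S₁ (Multiset.replicate k t₀ + Sout) := by
      conv_lhs => rw [hsplit]
      exact equiv_add_right Sout hg
    exact finish _ (equiv_trans heq1 heq2) (base_pairinj ht₀ ho1 hLd hRd)
  · have heq2 : NielsenEquiv S₁ ((A ::ₘ B ::ₘ Multiset.replicate k A) + Sout) := by
      conv_lhs => rw [hsplit]
      exact equiv_add_right Sout hg
    have heqS : NielsenEquiv S ((A ::ₘ B ::ₘ Multiset.replicate k A) + Sout) :=
      equiv_trans heq1 heq2
    by_cases hP : ∀ x ∈ Sout, ∀ h ∈ H, ∃ y ∈ Sout, piL H (h * x) = piL H y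
    · have hgen2 : Subgroup.closure
          {z : G | z ∈ (A ::ₘ B ::ₘ Multiset.replicate k A) + Sout} = ⊤ := by
        rw [← closure_equiv heqS]
        exact hgen
      have hcard2 : Multiset.card ((A ::ₘ B ::ₘ Multiset.replicate k A) + Sout) ≤ H.index := by
        rw [← card_equiv heqS]
        exact hcard
      obtain ⟨S₃, h3, hpair⟩ := caseB hA hB hspan hp e k ho1 hLd hRd hP hgen2 hcard2
      exact finish S₃ (equiv_trans heqS h3) hpair
    · push_neg at hP
      obtain ⟨S₃, h3, hpair⟩ := caseA hp e hA hB hspan k ho1 hLd hRd hP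
      exact finish S₃ (equiv_trans heqS h3) hpair
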